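/- arXiv:2403.00967 — 4 statements merged into one kernel-verified Lean document; each statement's English description precedes it below -/
import Mathlib

section
/- Let m ≥ 2 be an integer and H ∈ (1/2, (m+1)/(2m)). Suppose α_i : ℝ → [0,∞) for i = 1,...,m satisfy α_i(x) ≤ C · min(1, |x|^{2H-2}) for all x ∈ ℝ and some constant C > 0. Then the integral ∫_{ℝ^{m-1}} α_1(x_1) α_2(x_1 - x_2) ⋯ α_{m-1}(x_{m-2} - x_{m-1}) α_m(x_{m-1}) dx_1 ⋯ dx_{m-1} is finite. -/
open MeasureTheory Real
open scoped ENNReal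

namespace ConvChain

noncomputable def F (g : ℝ → ℝ≥0∞) : ℕ → ℝ → ℝ≥0∞
  | 0 => g
  | (k+1) => fun t => ∫⁻ y, F g k y * g (y - t)

lemma F_meas {g : ℝ → ℝ≥0∞} (hg : Measurable g) : ∀ k, Measurable (F g k)
  | 0 => hg
  | (k+1) => by
    have h : Measurable fun p : ℝ × ℝ => F g k p.2 * g (p.2 - p.1) :=
      ((F_meas hg k).comp measurable_snd).mul (hg.comp (measurable_snd.sub measurable_fst))
    exact h.lintegral_prod_right'

lemma chain {g : ℝ → ℝ≥0∞} (hg : Measurable g) (n : ℕ) : ∀ k : ℕ,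
    ∫⁻ x : Fin (n+1) → ℝ,
      (F g k (x 0) * ∏ j : Fin n, g (x j.castSucc - x j.succ)) * g (x (Fin.last n))
      = ∫⁻ t : ℝ, F g (k+n) t * g t := by
  induction n with
  | zero =>
    intro k
    simp only [Finset.univ_eq_empty, Finset.prod_empty, mul_one, Nat.add_zero]
    have hmp := MeasureTheory.volume_preserving_funUnique (Fin 1) ℝ
    have hφ : Measurable fun t : ℝ => F g k t * g t := (F_meas hg k).mul hg
    have := hmp.lintegral_comp hφ
    rw [← this]
    rfl
  | succ n ih =>
    intro k
    have hF := F_meas hg k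
    have hmp := MeasureTheory.measurePreserving_piFinSuccAbove
      (fun _ : Fin (n+2) => (volume : Measure ℝ)) 0
    set e := MeasurableEquiv.piFinSuccAbove (fun _ : Fin (n+2) => ℝ) 0 with he
    set Ψ : ℝ × (Fin (n+1) → ℝ) → ℝ≥0∞ := fun z =>
      (F g k z.1 * g (z.1 - z.2 0)) *
        ((∏ j : Fin n, g (z.2 j.castSucc - z.2 j.succ)) * g (z.2 (Fin.last n))) with hΨ
    have hΨm : Measurable Ψ := by rw [hΨ]; fun_prop
    have hcomp : ∀ x : Fin (n+2) → ℝ,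
        (F g k (x 0) * ∏ j : Fin (n+1), g (x j.castSucc - x j.succ)) * g (x (Fin.last (n+1)))
        = Ψ (e x) := by
      intro x
      have ha : (e x).1 = x 0 := rfl
      have hb : ∀ j : Fin (n+1), (e x).2 j = x j.succ := by
        intro j
        show x ((0 : Fin (n+2)).succAbove j) = x j.succ
        rw [Fin.succAbove_zero]
      rw [hΨ]
      simp only [ha, hb]
      rw [Fin.prod_univ_succ]
      simp only [Fin.succ_castSucc, Fin.succ_last, Fin.castSucc_zero]
      ring
    calc ∫⁻ x : Fin (n+2) → ℝ,
          (F g k (x 0) * ∏ j : Fin (n+1), g (x j.castSucc - x j.succ)) * g (x (Fin.last (n+1)))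
        = ∫⁻ y : Fin (n+1) → ℝ, ∫⁻ a : ℝ, Ψ (a, y) := by
          exact (lintegral_congr hcomp).trans
            ((hmp.lintegral_comp hΨm).trans (lintegral_prod_symm _ hΨm.aemeasurable))
      _ = ∫⁻ y : Fin (n+1) → ℝ,
            (F g (k+1) (y 0) * ∏ j : Fin n, g (y j.castSucc - y j.succ)) * g (y (Fin.last n)) := by
          apply lintegral_congr
          intro y
          rw [hΨ]
          simp only []
          rw [lintegral_mul_const _ (show Measurable fun a : ℝ => F g k a * g (a - y 0) by fun_prop)]
          have : F g (k+1) (y 0) = ∫⁻ a, F g k a * g (a - y 0) := rfl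
          rw [this]
          ring
      _ = ∫⁻ t : ℝ, F g (k+1+n) t * g t := ih (k+1)
      _ = ∫⁻ t : ℝ, F g (k+(n+1)) t * g t := by ring_nf


lemma lintegral_sub_left' {h : ℝ → ℝ≥0∞} (hh : Measurable h) (y : ℝ) :
    ∫⁻ x, h (y - x) = ∫⁻ x, h x := by
  have hneg : ∀ φ : ℝ → ℝ≥0∞, Measurable φ → ∫⁻ x, φ (-x) = ∫⁻ x, φ x := by
    intro φ hφ
    conv_rhs => rw [← Measure.map_neg_eq_self (volume : Measure ℝ)]
    exact (lintegral_map' hφ.aemeasurable measurable_neg.aemeasurable).symm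
  have h1 : ∫⁻ x, h (y - x) = ∫⁻ x, h (y + x) := by
    simp_rw [sub_eq_add_neg]
    exact hneg (fun x => h (y + x)) (hh.comp (measurable_const.add measurable_id))
  rw [h1, lintegral_add_left_eq_self (fun x => h x) y]

lemma young {f g : ℝ → ℝ≥0∞} (hf : Measurable f) (hg : Measurable g) {p q r : ℝ}
    (hp : 1 < p) (hq : 1 < q) (hpr : p < r) (hqr : q < r)
    (hpqr : 1/p + 1/q = 1 + 1/r) :
    ∫⁻ x, (∫⁻ y, f y * g (y - x)) ^ r ≤
      (∫⁻ y, f y ^ p) ^ (r/p) * (∫⁻ y, g y ^ q) ^ (r/q) := by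
  have hp0 : 0 < p := lt_trans one_pos hp
  have hq0 : 0 < q := lt_trans one_pos hq
  have hr0 : 0 < r := lt_trans hp0 hpr
  set w1 : ℝ := 1/r with hw1def
  set w2 : ℝ := 1/p - 1/r with hw2def
  set w3 : ℝ := 1/q - 1/r with hw3def
  have hw1 : 0 < w1 := by positivity
  have hw2 : 0 < w2 := sub_pos.mpr (one_div_lt_one_div_of_lt hp0 hpr)
  have hw3 : 0 < w3 := sub_pos.mpr (one_div_lt_one_div_of_lt hq0 hqr)
  have hpw : p * w1 + p * w2 = 1 := by
    rw [hw1def, hw2def, ← mul_add, add_sub_cancel, mul_one_div_cancel hp0.ne']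
  have hqw : q * w1 + q * w3 = 1 := by
    rw [hw1def, hw3def, ← mul_add, add_sub_cancel, mul_one_div_cancel hq0.ne']
  set A := ∫⁻ y, f y ^ p with hA
  set B := ∫⁻ y, g y ^ q with hB
  have key : ∀ x : ℝ, (∫⁻ y, f y * g (y - x)) ^ r ≤
      (∫⁻ y, f y ^ p * g (y - x) ^ q) * (A ^ (w2 * r) * B ^ (w3 * r)) := by
    intro x
    have hgx : Measurable fun y => g (y - x) := hg.comp (measurable_id.sub measurable_const)
    set h : Fin 3 → ℝ → ℝ≥0∞ := ![fun y => f y ^ p * g (y - x) ^ q,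
      fun y => f y ^ p, fun y => g (y - x) ^ q] with hh
    set w : Fin 3 → ℝ := ![w1, w2, w3] with hw
    have hmeas : ∀ i ∈ Finset.univ, AEMeasurable (h i) volume := by
      intro i _
      fin_cases i
      · exact ((hf.pow_const p).mul (hgx.pow_const q)).aemeasurable
      · exact (hf.pow_const p).aemeasurable
      · exact (hgx.pow_const q).aemeasurable
    have hsum : ∑ i, w i = 1 := by
      simp only [hw, Fin.sum_univ_three, Matrix.cons_val_zero, Matrix.cons_val_one,
        Matrix.head_cons, Matrix.cons_val_two, Matrix.tail_cons, hw1def, hw2def, hw3def]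
      linarith
    have hwnn : ∀ i ∈ Finset.univ, (0:ℝ) ≤ w i := by
      intro i _; fin_cases i
      · exact hw1.le
      · exact hw2.le
      · exact hw3.le
    have H3 := ENNReal.lintegral_prod_norm_pow_le (μ := volume) Finset.univ hmeas hsum hwnn
    have hpt : ∀ y : ℝ, ∏ i, h i y ^ w i = f y * g (y - x) := by
      intro y
      simp only [hh, hw, Fin.prod_univ_three, Matrix.cons_val_zero, Matrix.cons_val_one,
        Matrix.head_cons, Matrix.cons_val_two, Matrix.tail_cons]
      rw [ENNReal.mul_rpow_of_nonneg _ _ hw1.le, ← ENNReal.rpow_mul, ← ENNReal.rpow_mul,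
        ← ENNReal.rpow_mul, ← ENNReal.rpow_mul]
      calc f y ^ (p * w1) * g (y - x) ^ (q * w1) * f y ^ (p * w2) * g (y - x) ^ (q * w3)
          = (f y ^ (p * w1) * f y ^ (p * w2)) * (g (y - x) ^ (q * w1) * g (y - x) ^ (q * w3)) := by
            ring
        _ = f y ^ (p * w1 + p * w2) * g (y - x) ^ (q * w1 + q * w3) := by
            rw [ENNReal.rpow_add_of_nonneg _ _ (by positivity) (by positivity),
              ENNReal.rpow_add_of_nonneg _ _ (by positivity) (by positivity)]
        _ = f y * g (y - x) := by rw [hpw, hqw, ENNReal.rpow_one, ENNReal.rpow_one]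
    have hint : ∫⁻ y, ∏ i, h i y ^ w i = ∫⁻ y, f y * g (y - x) := by
      exact lintegral_congr hpt
    rw [hint] at H3
    have hprod : ∏ i, (∫⁻ y, h i y) ^ w i
        = (∫⁻ y, f y ^ p * g (y - x) ^ q) ^ w1 * (A ^ w2 * B ^ w3) := by
      simp only [hh, hw, Fin.prod_univ_three, Matrix.cons_val_zero, Matrix.cons_val_one,
        Matrix.head_cons, Matrix.cons_val_two, Matrix.tail_cons]
      rw [lintegral_sub_right_eq_self (fun y => g y ^ q) x]
      ring
    rw [hprod] at H3
    calc (∫⁻ y, f y * g (y - x)) ^ r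
        ≤ ((∫⁻ y, f y ^ p * g (y - x) ^ q) ^ w1 * (A ^ w2 * B ^ w3)) ^ r :=
          ENNReal.rpow_le_rpow H3 hr0.le
      _ = (∫⁻ y, f y ^ p * g (y - x) ^ q) * (A ^ (w2 * r) * B ^ (w3 * r)) := by
          rw [ENNReal.mul_rpow_of_nonneg _ _ hr0.le, ENNReal.mul_rpow_of_nonneg _ _ hr0.le,
            ← ENNReal.rpow_mul, ← ENNReal.rpow_mul, ← ENNReal.rpow_mul,
            show w1 * r = 1 by rw [hw1def]; field_simp, ENNReal.rpow_one]
  have hmeas2 : Measurable fun x => ∫⁻ y, f y ^ p * g (y - x) ^ q := by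
    have : Measurable fun z : ℝ × ℝ => f z.2 ^ p * g (z.2 - z.1) ^ q :=
      ((hf.comp measurable_snd).pow_const p).mul
        (((hg.comp (measurable_snd.sub measurable_fst))).pow_const q)
    exact this.lintegral_prod_right'
  calc ∫⁻ x, (∫⁻ y, f y * g (y - x)) ^ r
      ≤ ∫⁻ x, (∫⁻ y, f y ^ p * g (y - x) ^ q) * (A ^ (w2 * r) * B ^ (w3 * r)) :=
        lintegral_mono key
    _ = (∫⁻ x, ∫⁻ y, f y ^ p * g (y - x) ^ q) * (A ^ (w2 * r) * B ^ (w3 * r)) :=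
        lintegral_mul_const _ hmeas2
    _ = (∫⁻ y, ∫⁻ x, f y ^ p * g (y - x) ^ q) * (A ^ (w2 * r) * B ^ (w3 * r)) := by
        congr 1
        have hm : AEMeasurable (fun z : ℝ × ℝ => f z.2 ^ p * g (z.2 - z.1) ^ q)
            ((volume : Measure ℝ).prod volume) :=
          (((hf.comp measurable_snd).pow_const p).mul
            (((hg.comp (measurable_snd.sub measurable_fst))).pow_const q)).aemeasurable
        rw [← lintegral_prod _ hm, lintegral_prod_symm _ hm]
    _ = (A * B) * (A ^ (w2 * r) * B ^ (w3 * r)) := by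
        congr 1
        have h1 : ∀ y : ℝ, ∫⁻ x, f y ^ p * g (y - x) ^ q = f y ^ p * B := by
          intro y
          rw [lintegral_const_mul _ (show Measurable fun x : ℝ => g (y - x) ^ q by fun_prop)]
          rw [lintegral_sub_left' (hg.pow_const q) y]
        rw [lintegral_congr h1, lintegral_mul_const _ (hf.pow_const p)]
    _ = A ^ (r/p) * B ^ (r/q) := by
        have e1 : (1:ℝ) + w2 * r = r / p := by rw [hw2def]; field_simp; ring
        have e2 : (1:ℝ) + w3 * r = r / q := by rw [hw3def]; field_simp; ring
        rw [← e1, ← e2, ENNReal.rpow_add_of_nonneg _ _ zero_le_one (by positivity),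
          ENNReal.rpow_add_of_nonneg _ _ zero_le_one (by positivity),
          ENNReal.rpow_one, ENNReal.rpow_one]
        ring


lemma intmin {c : ℝ} (hc : c < -1) : Integrable (fun x : ℝ => min 1 (|x| ^ c)) := by
  have hc0 : c ≤ 0 := by linarith
  have hmeas : Measurable fun x : ℝ => min 1 (|x| ^ c) := by fun_prop
  have hint : Integrable (fun x : ℝ => (2:ℝ) ^ (-c) * (1 + ‖x‖) ^ (-(-c))) volume :=
    (integrable_one_add_norm (E := ℝ) (μ := volume) (r := -c)
      (by simp [Module.finrank_self]; linarith)).const_mul _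
  refine hint.mono' hmeas.aestronglyMeasurable (Filter.Eventually.of_forall fun x => ?_)
  rw [neg_neg]
  have h0 : (0:ℝ) ≤ min 1 (|x| ^ c) := le_min zero_le_one (rpow_nonneg (abs_nonneg x) c)
  rw [Real.norm_eq_abs, abs_of_nonneg h0, Real.norm_eq_abs]
  rcases le_total (|x|) 1 with hx | hx
  · have h2 : (2:ℝ) ^ c ≤ (1 + |x|) ^ c := by
      apply Real.rpow_le_rpow_of_nonpos (by positivity) (by linarith) hc0
    calc min 1 (|x| ^ c) ≤ 1 := min_le_left _ _
      _ = (2:ℝ) ^ (-c) * (2:ℝ) ^ c := by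
          rw [← Real.rpow_add two_pos]; simp
      _ ≤ (2:ℝ) ^ (-c) * (1 + |x|) ^ c := by gcongr
  · have hx0 : (0:ℝ) < |x| := lt_of_lt_of_le one_pos hx
    have h2 : (2 * |x|) ^ c ≤ (1 + |x|) ^ c :=
      Real.rpow_le_rpow_of_nonpos (by positivity) (by linarith) hc0
    calc min 1 (|x| ^ c) ≤ |x| ^ c := min_le_right _ _
      _ = (2:ℝ) ^ (-c) * (2 * |x|) ^ c := by
          rw [Real.mul_rpow (by norm_num) (abs_nonneg x), ← mul_assoc,
            ← Real.rpow_add two_pos]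
          simp
      _ ≤ (2:ℝ) ^ (-c) * (1 + |x|) ^ c := by gcongr

lemma A_lt_top {C : ℝ} (hC : 0 < C) {b p : ℝ} (hb : b < 0) (hp : 0 < p)
    (hcond : b * p < -1) :
    ∫⁻ x : ℝ, (ENNReal.ofReal (C * min 1 (|x| ^ b))) ^ p < ⊤ := by
  have h1 : ∀ x : ℝ, (ENNReal.ofReal (C * min 1 (|x| ^ b))) ^ p
      = ENNReal.ofReal (C ^ p * min 1 (|x| ^ (b * p))) := by
    intro x
    have hmin0 : (0:ℝ) ≤ min 1 (|x| ^ b) := le_min zero_le_one (rpow_nonneg (abs_nonneg x) b)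
    rw [ENNReal.ofReal_rpow_of_nonneg (by positivity) hp.le]
    congr 1
    rw [Real.mul_rpow hC.le hmin0]
    congr 1
    rw [Real.rpow_mul (abs_nonneg x)]
    rcases le_total (|x| ^ b) 1 with h | h
    · rw [min_eq_right h, min_eq_right
        (Real.rpow_le_one (rpow_nonneg (abs_nonneg x) b) h hp.le)]
    · rw [min_eq_left h, min_eq_left (Real.one_le_rpow h hp.le), Real.one_rpow]
  rw [lintegral_congr h1]
  exact ((intmin hcond).const_mul (C ^ p)).lintegral_lt_top

end ConvChain

open ConvChain

theorem convolution_chain_integral_finite (m : ℕ) (hm : 2 ≤ m) (H : ℝ)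
    (hH : H ∈ Set.Ioo (1/2 : ℝ) ((m + 1) / (2 * m) : ℝ))
    (C : ℝ) (hC : 0 < C) (α : ℕ → ℝ → ℝ)
    (hnonneg : ∀ i < m, ∀ x : ℝ, 0 ≤ α i x)
    (hbound : ∀ i < m, ∀ x : ℝ, α i x ≤ C * min 1 (|x| ^ (2 * H - 2))) :
    (∫⁻ x : Fin (m - 1) → ℝ, ENNReal.ofReal
      ((fun x' : ℕ → ℝ =>
          α 0 (x' 0) * (∏ j ∈ Finset.Ico 1 (m - 1), α j (x' (j - 1) - x' j))
            * α (m - 1) (x' (m - 2)))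
        (fun n => if h : n < m - 1 then x ⟨n, h⟩ else 0))) < ⊤ := by
  obtain ⟨n, rfl⟩ : ∃ n, m = n + 2 := ⟨m - 2, by omega⟩
  set N : ℝ := (n : ℝ) with hN
  have hNn : (0:ℝ) ≤ N := Nat.cast_nonneg n
  obtain ⟨hH1, hH2⟩ := hH
  have hH2' : H < (N + 3) / (2 * (N + 2)) := by
    rw [hN]
    convert hH2 using 2
    · rfl
    all_goals (push_cast; ring)
  have hb : 2 * H - 2 < 0 := by
    have h1 : (N + 3) / (2 * (N + 2)) ≤ 1 := by
      rw [div_le_one (by positivity)]; linarith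
    linarith
  set β : ℝ → ℝ := fun x => C * min 1 (|x| ^ (2 * H - 2)) with hβ
  set g : ℝ → ℝ≥0∞ := fun x => ENNReal.ofReal (β x) with hg'
  have hg : Measurable g := by rw [hg', hβ]; fun_prop
  set q : ℝ := (N + 2) / (N + 1) with hq'
  have hq1 : 1 < q := by
    rw [hq', lt_div_iff₀ (by positivity)]; linarith
  have hAq : ∫⁻ x : ℝ, g x ^ q < ⊤ := by
    apply A_lt_top hC hb (by positivity)
    rw [hq', ← mul_div_assoc, div_lt_iff₀ (by positivity)]
    have h2 : H * (2 * (N + 2)) < N + 3 := (lt_div_iff₀ (by positivity)).mp hH2'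
    nlinarith
  have key : ∀ k : ℕ, k ≤ n → ∫⁻ t : ℝ, F g k t ^ ((N + 2) / (N + 1 - (k:ℝ))) < ⊤ := by
    intro k
    induction k with
    | zero =>
      intro _
      have hF0 : F g 0 = g := rfl
      rw [hF0]
      norm_num
      rw [← hq']
      exact hAq
    | succ k ih =>
      intro hk
      have hk' : (k:ℝ) + 1 ≤ N := by
        rw [hN]; exact_mod_cast Nat.succ_le_of_lt (by omega)
      have hkn : k ≤ n := by omega
      set p : ℝ := (N + 2) / (N + 1 - (k:ℝ)) with hp'
      set r : ℝ := (N + 2) / (N - (k:ℝ)) with hr'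
      have hd1 : (0:ℝ) < N + 1 - (k:ℝ) := by linarith
      have hd2 : (0:ℝ) < N - (k:ℝ) := by linarith
      have hp : 1 < p := by rw [hp', lt_div_iff₀ hd1]; linarith
      have hpr : p < r := by
        rw [hp', hr']
        exact div_lt_div_of_pos_left (by linarith) hd2 (by linarith)
      have hqr : q < r := by
        rw [hq', hr']
        exact div_lt_div_of_pos_left (by linarith) hd2 (by linarith)
      have hpqr : 1/p + 1/q = 1 + 1/r := by
        rw [hp', hq', hr', one_div_div, one_div_div, one_div_div]
        field_simp
        ring
      have hY := young (F_meas hg k) hg hp hq1 hpr hqr hpqr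
      have hstep : ∫⁻ t : ℝ, F g (k+1) t ^ r < ⊤ := by
        refine lt_of_le_of_lt hY ?_
        exact ENNReal.mul_lt_top
          (ENNReal.rpow_lt_top_of_nonneg (by positivity) (ih hkn).ne)
          (ENNReal.rpow_lt_top_of_nonneg (by positivity) hAq.ne)
      have hexp : (N + 2) / (N + 1 - ((k+1 : ℕ) : ℝ)) = r := by
        rw [hr']; congr 1; push_cast; ring
      rw [hexp]
      exact hstep
  have hFn := key n le_rfl
  have hexp2 : (N + 2) / (N + 1 - (n:ℝ)) = N + 2 := by
    rw [hN]; norm_num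
  rw [hexp2] at hFn
  have hconj : (N + 2).HolderConjugate q := by
    rw [Real.holderConjugate_iff_eq_conjExponent (by linarith), hq']
    congr 1
    ring
  have hHolder := ENNReal.lintegral_mul_le_Lp_mul_Lq volume hconj
    (F_meas hg n).aemeasurable hg.aemeasurable
  have hfinal : ∫⁻ t : ℝ, F g n t * g t < ⊤ := by
    refine lt_of_le_of_lt hHolder ?_
    exact ENNReal.mul_lt_top
      (ENNReal.rpow_lt_top_of_nonneg (by positivity) hFn.ne)
      (ENNReal.rpow_lt_top_of_nonneg (by positivity) hAq.ne)
  have hchain := chain hg n 0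
  rw [zero_add] at hchain
  have hmono : (∫⁻ x : Fin (n + 1) → ℝ, ENNReal.ofReal
      ((fun x' : ℕ → ℝ =>
          α 0 (x' 0) * (∏ j ∈ Finset.Ico 1 (n + 1), α j (x' (j - 1) - x' j))
            * α (n + 1) (x' n))
        (fun i => if h : i < n + 1 then x ⟨i, h⟩ else 0)))
      ≤ ∫⁻ x : Fin (n+1) → ℝ,
        (F g 0 (x 0) * ∏ j : Fin n, g (x j.castSucc - x j.succ)) * g (x (Fin.last n)) := by
    refine lintegral_mono fun x => ?_
    set x' : ℕ → ℝ := fun i => if h : i < n + 1 then x ⟨i, h⟩ else 0 with hx'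
    have haux : ∀ (i : ℕ) (h : i < n + 1), x' i = x ⟨i, h⟩ := fun i h => dif_pos h
    have hx0 : x' 0 = x 0 := by
      rw [haux 0 (Nat.succ_pos n)]
      exact congrArg x (Fin.ext (by simp))
    have hxn : x' n = x (Fin.last n) := by
      rw [haux n (Nat.lt_succ_self n)]
      exact congrArg x (Fin.ext (by simp [Fin.last]))
    have hprod_nonneg : 0 ≤ ∏ j ∈ Finset.Ico 1 (n + 1), α j (x' (j - 1) - x' j) :=
      Finset.prod_nonneg fun j hj => hnonneg j (by
        have := (Finset.mem_Ico.mp hj).2; omega) _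
    simp only []
    calc ENNReal.ofReal (α 0 (x' 0) * (∏ j ∈ Finset.Ico 1 (n+1), α j (x' (j-1) - x' j))
          * α (n+1) (x' n))
        = ENNReal.ofReal (α 0 (x' 0)) *
            ENNReal.ofReal (∏ j ∈ Finset.Ico 1 (n+1), α j (x' (j-1) - x' j)) *
            ENNReal.ofReal (α (n+1) (x' n)) := by
          rw [ENNReal.ofReal_mul (mul_nonneg (hnonneg 0 (by omega) _) hprod_nonneg),
            ENNReal.ofReal_mul (hnonneg 0 (by omega) _)]
      _ ≤ g (x' 0) * (∏ j ∈ Finset.Ico 1 (n+1), g (x' (j-1) - x' j)) * g (x' n) := by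
          refine mul_le_mul' (mul_le_mul' ?_ ?_) ?_
          · exact ENNReal.ofReal_le_ofReal (hbound 0 (by omega) _)
          · rw [ENNReal.ofReal_prod_of_nonneg fun j hj => hnonneg j
              (by have := (Finset.mem_Ico.mp hj).2; omega) _]
            exact Finset.prod_le_prod' fun j hj => ENNReal.ofReal_le_ofReal
              (hbound j (by have := (Finset.mem_Ico.mp hj).2; omega) _)
          · exact ENNReal.ofReal_le_ofReal (hbound (n+1) (by omega) _)
      _ = (F g 0 (x 0) * ∏ j : Fin n, g (x j.castSucc - x j.succ)) * g (x (Fin.last n)) := by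
          rw [hx0, hxn]
          have hpr : ∏ j ∈ Finset.Ico 1 (n+1), g (x' (j-1) - x' j)
              = ∏ j : Fin n, g (x j.castSucc - x j.succ) := by
            rw [Finset.prod_Ico_eq_prod_range]
            simp only [Nat.add_sub_cancel, Nat.add_sub_cancel_left]
            rw [← Fin.prod_univ_eq_prod_range (fun i => g (x' i - x' (1 + i))) n]
            refine Finset.prod_congr rfl fun j _ => ?_
            have hj1 : (j:ℕ) < n + 1 := by have := j.isLt; omega
            have hj2 : 1 + (j:ℕ) < n + 1 := by have := j.isLt; omega
            have h1 : x' (j:ℕ) = x j.castSucc := by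
              rw [haux _ hj1]
              exact congrArg x (Fin.ext rfl)
            have h2 : x' (1 + (j:ℕ)) = x j.succ := by
              rw [haux _ hj2]
              exact congrArg x (Fin.ext (Nat.add_comm 1 _))
            rw [h1, h2]
          rw [hpr]
          rfl
  exact lt_of_le_of_lt hmono (by rw [hchain]; exact hfinal)
end

section
/- Let m ≥ 2 and let p_1, ..., p_m > -1 be real numbers with p_1 + ⋯ + p_m + m - 1 > 0. Then the cyclic integral B_m(p_1,...,p_m) = ∫_{[0,1]^m} |x_1 - x_2|^{p_1} |x_2 - x_3|^{p_2} ⋯ |x_{m-1} - x_m|^{p_{m-1}} |x_m - x_1|^{p_m} dx_1⋯dx_m is finite. -/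
open MeasureTheory Real

/-- Cyclic lookup of coordinates: `cyc x n = x (n % m)`. -/
def cyc {m : ℕ} (x : Fin m → ℝ) (n : ℕ) : ℝ :=
  if h : 0 < m then x ⟨n % m, Nat.mod_lt n h⟩ else 0


lemma mod_inj {m c a b : ℕ} (ha : a < m) (hb : b < m) (h : (c + a) % m = (c + b) % m) :
    a = b := by
  have h2 : a ≡ b [MOD m] := Nat.ModEq.add_left_cancel' c h
  rwa [Nat.ModEq, Nat.mod_eq_of_lt ha, Nat.mod_eq_of_lt hb] at h2

lemma w_reindex {M : Type*} [CommMonoid M] {m j : ℕ} (hj : j < m) (g : ℕ → M) :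
    ∏ t ∈ Finset.range (m-1), g ((j+1+t) % m) = ∏ i ∈ (Finset.range m).erase j, g i := by
  have hm : 0 < m := lt_of_le_of_lt (Nat.zero_le j) hj
  apply Finset.prod_bij (fun t _ => (j+1+t) % m)
  · intro t ht
    have ht' := Finset.mem_range.mp ht
    refine Finset.mem_erase.mpr ⟨?_, Finset.mem_range.mpr (Nat.mod_lt _ hm)⟩
    intro h
    have h' : (j + 1 + t) % m = (j + 1 + (m-1)) % m := by
      rw [h, show j + 1 + (m-1) = j + m by omega, Nat.add_mod_right, Nat.mod_eq_of_lt hj]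
    have := mod_inj (c := j+1) (by omega) (by omega) h'
    omega
  · intro a₁ ha₁ a₂ ha₂ h
    have ha₁' := Finset.mem_range.mp ha₁
    have ha₂' := Finset.mem_range.mp ha₂
    exact mod_inj (c := j+1) (by omega) (by omega) h
  · intro b hb
    obtain ⟨hbj, hbm⟩ := Finset.mem_erase.mp hb
    have hbm' := Finset.mem_range.mp hbm
    rcases Nat.lt_or_ge j b with hlt | hge
    · refine ⟨b - j - 1, Finset.mem_range.mpr (by omega), ?_⟩
      have : j + 1 + (b - j - 1) = b := by omega
      rw [this, Nat.mod_eq_of_lt hbm']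
    · have hlt : b < j := by omega
      refine ⟨b + m - j - 1, Finset.mem_range.mpr (by omega), ?_⟩
      have : j + 1 + (b + m - j - 1) = b + m := by omega
      rw [this, Nat.add_mod_right, Nat.mod_eq_of_lt hbm']
  · intro a _; rfl

lemma cube_eq (m : ℕ) :
    (volume : Measure (Fin m → ℝ)).restrict (Set.univ.pi fun _ => Set.Icc (0:ℝ) 1) =
    Measure.pi fun _ : Fin m => volume.restrict (Set.Icc (0:ℝ) 1) := by
  haveI : IsFiniteMeasure (volume.restrict (Set.Icc (0:ℝ) 1)) :=
    ⟨by rw [Measure.restrict_apply MeasurableSet.univ]; simp [Real.volume_Icc]⟩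
  refine (Measure.pi_eq (μ := fun _ : Fin m => volume.restrict (Set.Icc (0:ℝ) 1)) fun s hs => ?_).symm
  rw [Measure.restrict_apply (MeasurableSet.univ_pi hs)]
  have h1 : (Set.univ.pi s) ∩ (Set.univ.pi fun _ => Set.Icc (0:ℝ) 1) =
      Set.univ.pi (fun i => s i ∩ Set.Icc 0 1) := by
    rw [← Set.pi_inter_distrib]
  rw [h1, volume_pi, Measure.pi_pi]
  exact Finset.prod_congr rfl fun i _ => (Measure.restrict_apply (hs i)).symm


lemma oneD {a q : ℝ} (ha : a ∈ Set.Icc (0:ℝ) 1) (hq : -1 < q) :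
    ∫⁻ t in Set.Icc (0:ℝ) 1, ENNReal.ofReal (|a - t| ^ q) ≤ ENNReal.ofReal (2 / (q + 1)) := by
  obtain ⟨ha0, ha1⟩ := ha
  have hq1 : 0 < q + 1 := by linarith
  -- interval integrability pieces
  have I1 : IntervalIntegrable (fun t => (a - t) ^ q) volume 0 a := by
    have := ((intervalIntegral.intervalIntegrable_rpow' hq (a := 0) (b := a)).comp_sub_left a).symm
    simpa using this
  have I2 : IntervalIntegrable (fun t => (t - a) ^ q) volume a 1 := by
    have := (intervalIntegral.intervalIntegrable_rpow' hq (a := 0) (b := 1 - a)).comp_sub_right a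
    simpa using this
  have E1 : Set.EqOn (fun t : ℝ => |a - t| ^ q) (fun t => (a - t) ^ q) (Set.uIcc 0 a) := by
    intro t ht
    rw [Set.uIcc_of_le ha0] at ht
    simp only
    rw [abs_of_nonneg (by linarith [ht.2])]
  have E2 : Set.EqOn (fun t : ℝ => |a - t| ^ q) (fun t => (t - a) ^ q) (Set.uIcc a 1) := by
    intro t ht
    rw [Set.uIcc_of_le ha1] at ht
    simp only
    rw [abs_of_nonpos (by linarith [ht.1]), neg_sub]
  have ae1 : ∀ᵐ t ∂volume.restrict (Set.uIoc 0 a),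
      (fun t => (a - t) ^ q) t = (fun t : ℝ => |a - t| ^ q) t := by
    filter_upwards [ae_restrict_mem measurableSet_uIoc] with t ht
    exact (E1 (Set.uIoc_subset_uIcc ht)).symm
  have ae2 : ∀ᵐ t ∂volume.restrict (Set.uIoc a 1),
      (fun t => (t - a) ^ q) t = (fun t : ℝ => |a - t| ^ q) t := by
    filter_upwards [ae_restrict_mem measurableSet_uIoc] with t ht
    exact (E2 (Set.uIoc_subset_uIcc ht)).symm
  have J1 : IntervalIntegrable (fun t : ℝ => |a - t| ^ q) volume 0 a := I1.congr_ae ae1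
  have J2 : IntervalIntegrable (fun t : ℝ => |a - t| ^ q) volume a 1 := I2.congr_ae ae2
  have J : IntervalIntegrable (fun t : ℝ => |a - t| ^ q) volume 0 1 := J1.trans J2
  have hInt : IntegrableOn (fun t : ℝ => |a - t| ^ q) (Set.Icc (0:ℝ) 1) volume :=
    (intervalIntegrable_iff_integrableOn_Icc_of_le (by norm_num)).mp J
  -- value computation
  have v1 : ∫ t in (0:ℝ)..a, |a - t| ^ q = a ^ (q+1) / (q+1) := by
    rw [intervalIntegral.integral_congr E1]
    rw [intervalIntegral.integral_comp_sub_left (fun s => s ^ q) a]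
    rw [sub_self, sub_zero, integral_rpow (Or.inl hq)]
    rw [Real.zero_rpow (by linarith), sub_zero]
  have v2 : ∫ t in a..(1:ℝ), |a - t| ^ q = (1-a) ^ (q+1) / (q+1) := by
    rw [intervalIntegral.integral_congr E2]
    rw [intervalIntegral.integral_comp_sub_right (fun s => s ^ q) a]
    rw [sub_self, integral_rpow (Or.inl hq)]
    rw [Real.zero_rpow (by linarith), sub_zero]
  have vtot : ∫ t in Set.Icc (0:ℝ) 1, |a - t| ^ q = a ^ (q+1) / (q+1) + (1-a) ^ (q+1) / (q+1) := by
    rw [MeasureTheory.integral_Icc_eq_integral_Ioc,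
      ← intervalIntegral.integral_of_le (by norm_num : (0:ℝ) ≤ 1),
      ← intervalIntegral.integral_add_adjacent_intervals J1 J2, v1, v2]
  have hle : a ^ (q+1) / (q+1) + (1-a) ^ (q+1) / (q+1) ≤ 2 / (q+1) := by
    have h1 : a ^ (q+1) ≤ 1 := Real.rpow_le_one ha0 ha1 (by linarith)
    have h2 : (1-a) ^ (q+1) ≤ 1 := Real.rpow_le_one (by linarith) (by linarith) (by linarith)
    rw [← add_div]
    gcongr
    linarith
  calc ∫⁻ t in Set.Icc (0:ℝ) 1, ENNReal.ofReal (|a - t| ^ q)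
      = ENNReal.ofReal (∫ t in Set.Icc (0:ℝ) 1, |a - t| ^ q) := by
        rw [← MeasureTheory.ofReal_integral_eq_lintegral_ofReal hInt]
        · exact (Filter.Eventually.of_forall fun t => Real.rpow_nonneg (abs_nonneg _) q)
    _ ≤ ENNReal.ofReal (2 / (q + 1)) := by
        rw [vtot]; exact ENNReal.ofReal_le_ofReal hle


lemma chain (m : ℕ) (hm : 0 < m) (v : ℕ → Fin m)
    (hv : ∀ s, s < m → ∀ t, t < m → v s = v t → s = t)
    (q : ℕ → ℝ) (hq : ∀ t, t < m - 1 → -1 < q t) :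
    ∫⁻ x, (∏ t ∈ Finset.range (m-1), ENNReal.ofReal (|x (v t) - x (v (t+1))| ^ q t))
        ∂(Measure.pi fun _ : Fin m => volume.restrict (Set.Icc (0:ℝ) 1)) < ⊤ := by
  set μ : Fin m → Measure ℝ := fun _ => volume.restrict (Set.Icc (0:ℝ) 1) with hμ
  haveI : ∀ i : Fin m, IsFiniteMeasure (μ i) := fun i => by
    constructor
    rw [hμ]
    simp [Real.volume_Icc]
  set F : (Fin m → ℝ) → ENNReal :=
    fun x => ∏ t ∈ Finset.range (m-1), ENNReal.ofReal (|x (v t) - x (v (t+1))| ^ q t) with hF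
  have hFm : Measurable F := by
    rw [hF]; fun_prop
  set C : ℕ → ENNReal := fun t => ENNReal.ofReal (2 / (q t + 1)) with hC
  have hμ1 : ∀ i : Fin m, μ i Set.univ = 1 := fun i => by
    rw [hμ]; simp [Real.volume_Icc]
  have key : ∀ d k, k + d = m → 1 ≤ k → ∀ x : Fin m → ℝ, (∀ i, x i ∈ Set.Icc (0:ℝ) 1) →
      (∫⋯∫⁻_((Finset.Ico k m).image v), F ∂μ) x ≤
        (∏ t ∈ Finset.Ico (k-1) (m-1), C t) *
          ∏ t ∈ Finset.range (k-1), ENNReal.ofReal (|x (v t) - x (v (t+1))| ^ q t) := by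
    intro d
    induction d with
    | zero =>
      intro k hk _ x _
      have : k = m := by omega
      subst this
      simp only [Finset.Ico_self, Finset.image_empty, MeasureTheory.lmarginal_empty]
      rw [Finset.prod_empty, one_mul, hF]
    | succ d ih =>
      intro k hk hk1 x hx
      obtain ⟨k', rfl⟩ : ∃ k', k = k' + 1 := ⟨k - 1, by omega⟩
      have hkm : k' + 1 < m := by omega
      have hIco : Finset.Ico (k'+1) m = insert (k'+1) (Finset.Ico (k'+2) m) := by
        ext a; simp only [Finset.mem_Ico, Finset.mem_insert]; omega
      have hnot : v (k'+1) ∉ (Finset.Ico (k'+2) m).image v := by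
        intro hmem
        obtain ⟨s, hs, hvs⟩ := Finset.mem_image.mp hmem
        have hs' := Finset.mem_Ico.mp hs
        have := hv s hs'.2 (k'+1) hkm hvs
        omega
      rw [hIco, Finset.image_insert,
        MeasureTheory.lmarginal_insert _ hFm hnot]
      have step : ∀ t ∈ Set.Icc (0:ℝ) 1,
          (∫⋯∫⁻_((Finset.Ico (k'+2) m).image v), F ∂μ) (Function.update x (v (k'+1)) t) ≤
          ((∏ s ∈ Finset.Ico (k'+1) (m-1), C s) *
            ∏ s ∈ Finset.range k', ENNReal.ofReal (|x (v s) - x (v (s+1))| ^ q s)) *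
            ENNReal.ofReal (|x (v k') - t| ^ q k') := by
        intro t ht
        have hupd : ∀ i, Function.update x (v (k'+1)) t i ∈ Set.Icc (0:ℝ) 1 := by
          intro i
          rcases eq_or_ne i (v (k'+1)) with h | h
          · subst h; rw [Function.update_self]; exact ht
          · rw [Function.update_of_ne h]; exact hx i
        have := ih (k'+2) (by omega) (by omega) (Function.update x (v (k'+1)) t) hupd
        simp only [show k' + 2 - 1 = k' + 1 by omega] at this
        refine this.trans (le_of_eq ?_)
        rw [Finset.prod_range_succ]
        have heq : ∀ s ∈ Finset.range k',
            ENNReal.ofReal (|Function.update x (v (k'+1)) t (v s) -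
              Function.update x (v (k'+1)) t (v (s+1))| ^ q s) =
            ENNReal.ofReal (|x (v s) - x (v (s+1))| ^ q s) := by
          intro s hs
          have hs' := Finset.mem_range.mp hs
          rw [Function.update_of_ne (fun h => by have := hv s (by omega) (k'+1) hkm h; omega),
            Function.update_of_ne (fun h => by have := hv (s+1) (by omega) (k'+1) hkm h; omega)]
        rw [Finset.prod_congr rfl heq]
        rw [Function.update_of_ne (fun h => by have := hv k' (by omega) (k'+1) hkm h; omega),
          Function.update_self]
        ring
      calc ∫⁻ t, (∫⋯∫⁻_((Finset.Ico (k'+2) m).image v), F ∂μ) (Function.update x (v (k'+1)) t) ∂μ (v (k'+1))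
          ≤ ∫⁻ t, ((∏ s ∈ Finset.Ico (k'+1) (m-1), C s) *
              ∏ s ∈ Finset.range k', ENNReal.ofReal (|x (v s) - x (v (s+1))| ^ q s)) *
              ENNReal.ofReal (|x (v k') - t| ^ q k') ∂μ (v (k'+1)) := by
            apply lintegral_mono_ae
            filter_upwards [ae_restrict_mem measurableSet_Icc] with t ht
            exact step t ht
        _ = ((∏ s ∈ Finset.Ico (k'+1) (m-1), C s) *
              ∏ s ∈ Finset.range k', ENNReal.ofReal (|x (v s) - x (v (s+1))| ^ q s)) *
              ∫⁻ t, ENNReal.ofReal (|x (v k') - t| ^ q k') ∂μ (v (k'+1)) := by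
            rw [lintegral_const_mul]
            fun_prop
        _ ≤ ((∏ s ∈ Finset.Ico (k'+1) (m-1), C s) *
              ∏ s ∈ Finset.range k', ENNReal.ofReal (|x (v s) - x (v (s+1))| ^ q s)) * C k' := by
            apply mul_le_mul_right
            exact oneD (hx (v k')) (hq k' (by omega))
        _ ≤ (∏ t ∈ Finset.Ico (k'+1-1) (m-1), C t) *
              ∏ t ∈ Finset.range (k'+1-1), ENNReal.ofReal (|x (v t) - x (v (t+1))| ^ q t) := by
            simp only [Nat.add_sub_cancel]
            have : Finset.Ico k' (m-1) = insert k' (Finset.Ico (k'+1) (m-1)) := by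
              ext a; simp only [Finset.mem_Ico, Finset.mem_insert]; omega
            rw [this, Finset.prod_insert (by simp)]
            apply le_of_eq; ring
  -- now conclude
  have himg : (Finset.Ico 0 m).image v = Finset.univ := by
    apply Finset.eq_univ_of_card
    rw [Finset.card_image_of_injOn, Nat.card_Ico, Nat.sub_zero]
    · exact (Fintype.card_fin m).symm
    · intro s hs t ht hst
      have hs' := (Finset.mem_coe.mp hs)
      have ht' := (Finset.mem_coe.mp ht)
      exact hv s (Finset.mem_Ico.mp hs').2 t (Finset.mem_Ico.mp ht').2 hst
  have hIco0 : Finset.Ico 0 m = insert 0 (Finset.Ico 1 m) := by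
    ext a; simp only [Finset.mem_Ico, Finset.mem_insert]; omega
  have hnot0 : v 0 ∉ (Finset.Ico 1 m).image v := by
    intro hmem
    obtain ⟨s, hs, hvs⟩ := Finset.mem_image.mp hmem
    have hs' := Finset.mem_Ico.mp hs
    have := hv s hs'.2 0 hm hvs
    omega
  have x₀mem : ∀ i : Fin m, (fun _ : Fin m => (0:ℝ)) i ∈ Set.Icc (0:ℝ) 1 := fun i => by
    simp
  rw [MeasureTheory.lintegral_eq_lmarginal_univ (fun _ => (0:ℝ)), ← himg, hIco0,
    Finset.image_insert, MeasureTheory.lmarginal_insert _ hFm hnot0]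
  have A1 : ∀ t ∈ Set.Icc (0:ℝ) 1,
      (∫⋯∫⁻_((Finset.Ico 1 m).image v), F ∂μ) (Function.update (fun _ => (0:ℝ)) (v 0) t) ≤
      ∏ s ∈ Finset.Ico 0 (m-1), C s := by
    intro t ht
    have hupd : ∀ i, Function.update (fun _ : Fin m => (0:ℝ)) (v 0) t i ∈ Set.Icc (0:ℝ) 1 := by
      intro i
      rcases eq_or_ne i (v 0) with h | h
      · subst h; rw [Function.update_self]; exact ht
      · rw [Function.update_of_ne h]; exact x₀mem i
    have := key (m-1) 1 (by omega) le_rfl _ hupd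
    simpa using this
  calc ∫⁻ t, (∫⋯∫⁻_((Finset.Ico 1 m).image v), F ∂μ) (Function.update (fun _ => (0:ℝ)) (v 0) t) ∂μ (v 0)
      ≤ ∫⁻ _, (∏ s ∈ Finset.Ico 0 (m-1), C s) ∂μ (v 0) := by
        apply lintegral_mono_ae
        filter_upwards [ae_restrict_mem measurableSet_Icc] with t ht
        exact A1 t ht
    _ = ∏ s ∈ Finset.Ico 0 (m-1), C s := by
        rw [lintegral_const, hμ1 (v 0), mul_one]
    _ < ⊤ := ENNReal.prod_lt_top (fun s _ => ENNReal.ofReal_lt_top)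

theorem cyclic_integral_finite (m : ℕ) (hm : 2 ≤ m) (p : ℕ → ℝ)
    (hp : ∀ i < m, -1 < p i)
    (hsum : 0 < (∑ i ∈ Finset.range m, p i) + m - 1) :
    (∫⁻ x in Set.univ.pi (fun _ : Fin m => Set.Icc (0 : ℝ) 1),
        ENNReal.ofReal (∏ i ∈ Finset.range m, |cyc x i - cyc x (i + 1)| ^ p i)) < ⊤ := by
  have hm0 : 0 < m := by omega
  have hcyc : ∀ (x : Fin m → ℝ) (a : ℕ), cyc x a = x ⟨a % m, Nat.mod_lt a hm0⟩ :=
    fun x a => dif_pos hm0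
  rw [cube_eq m]
  have hvinj : ∀ j : ℕ, ∀ s, s < m → ∀ t, t < m →
      ((fun t => (⟨(j+1+t) % m, Nat.mod_lt _ hm0⟩ : Fin m)) s) =
      ((fun t => (⟨(j+1+t) % m, Nat.mod_lt _ hm0⟩ : Fin m)) t) → s = t := by
    intro j s hs t ht h
    exact mod_inj (c := j+1) hs ht (congrArg Fin.val h)
  have hconv : ∀ (x : Fin m → ℝ) (j t : ℕ),
      |cyc x ((j+1+t) % m) - cyc x ((j+1+t) % m + 1)| =
      |x (⟨(j+1+t) % m, Nat.mod_lt _ hm0⟩ : Fin m) -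
        x (⟨(j+1+(t+1)) % m, Nat.mod_lt _ hm0⟩ : Fin m)| := by
    intro x j t
    rw [hcyc, hcyc]
    have e1 : (⟨((j+1+t) % m) % m, Nat.mod_lt _ hm0⟩ : Fin m) =
        (⟨(j+1+t) % m, Nat.mod_lt _ hm0⟩ : Fin m) := Fin.ext (by simp)
    have e2 : (⟨((j+1+t) % m + 1) % m, Nat.mod_lt _ hm0⟩ : Fin m) =
        (⟨(j+1+(t+1)) % m, Nat.mod_lt _ hm0⟩ : Fin m) := by
      apply Fin.ext
      show ((j+1+t) % m + 1) % m = (j+1+(t+1)) % m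
      rw [Nat.mod_add_mod]
      congr 1
    rw [e1, e2]
  by_cases hA : ∃ j, j < m ∧ 0 ≤ p j
  · obtain ⟨j, hjm, hpj⟩ := hA
    have hchain := chain m hm0 (fun t => ⟨(j+1+t) % m, Nat.mod_lt _ hm0⟩)
      (hvinj j) (fun t => p ((j+1+t) % m))
      (fun t _ => hp _ (Nat.mod_lt _ hm0))
    refine lt_of_le_of_lt ?_ hchain
    apply lintegral_mono_ae
    rw [← cube_eq m]
    filter_upwards [ae_restrict_mem (MeasurableSet.univ_pi fun _ => measurableSet_Icc)] with x hx
    have hx' : ∀ i : Fin m, x i ∈ Set.Icc (0:ℝ) 1 := fun i => hx i (Set.mem_univ i)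
    rw [ENNReal.ofReal_prod_of_nonneg (fun i _ => Real.rpow_nonneg (abs_nonneg _) _),
      ← Finset.mul_prod_erase _ _ (Finset.mem_range.mpr hjm)]
    have h1 : ENNReal.ofReal (|cyc x j - cyc x (j+1)| ^ p j) ≤ 1 := by
      have habs : |cyc x j - cyc x (j+1)| ^ p j ≤ 1 := by
        apply Real.rpow_le_one (abs_nonneg _) _ hpj
        rw [hcyc, hcyc]
        obtain ⟨b1, b2⟩ := hx' ⟨j % m, Nat.mod_lt _ hm0⟩
        obtain ⟨c1, c2⟩ := hx' ⟨(j+1) % m, Nat.mod_lt _ hm0⟩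
        rw [abs_sub_le_iff]
        constructor <;> linarith
      calc ENNReal.ofReal (|cyc x j - cyc x (j+1)| ^ p j) ≤ ENNReal.ofReal 1 :=
            ENNReal.ofReal_le_ofReal habs
        _ = 1 := ENNReal.ofReal_one
    calc ENNReal.ofReal (|cyc x j - cyc x (j+1)| ^ p j) *
          ∏ i ∈ (Finset.range m).erase j, ENNReal.ofReal (|cyc x i - cyc x (i+1)| ^ p i)
        ≤ 1 * ∏ i ∈ (Finset.range m).erase j, ENNReal.ofReal (|cyc x i - cyc x (i+1)| ^ p i) :=
          mul_le_mul_left h1 _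
      _ = ∏ i ∈ (Finset.range m).erase j, ENNReal.ofReal (|cyc x i - cyc x (i+1)| ^ p i) :=
          one_mul _
      _ = ∏ t ∈ Finset.range (m-1),
            ENNReal.ofReal (|x (⟨(j+1+t) % m, Nat.mod_lt _ hm0⟩ : Fin m) -
              x (⟨(j+1+(t+1)) % m, Nat.mod_lt _ hm0⟩ : Fin m)| ^ p ((j+1+t) % m)) := by
          rw [← w_reindex hjm (fun i => ENNReal.ofReal (|cyc x i - cyc x (i+1)| ^ p i))]
          exact Finset.prod_congr rfl fun t _ => by rw [hconv x j t]
  · push_neg at hA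
    set S : ℕ → ℝ := fun j => ∑ i ∈ (Finset.range m).erase j, (1 + p i) with hS
    have hSeq : ∀ j, j < m → S j = (m : ℝ) - 1 + ((∑ i ∈ Finset.range m, p i) - p j) := by
      intro j hj
      rw [hS]
      simp only
      rw [Finset.sum_add_distrib, Finset.sum_const,
        Finset.card_erase_of_mem (Finset.mem_range.mpr hj), Finset.card_range,
        nsmul_eq_mul, mul_one, Nat.cast_sub (by omega : 1 ≤ m), Nat.cast_one]
      have h2 := Finset.add_sum_erase (Finset.range m) p (Finset.mem_range.mpr hj)
      linarith
    have hSpos : ∀ j, j < m → 0 < S j := by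
      intro j hj
      apply Finset.sum_pos
      · intro i hi
        have him : i < m := Finset.mem_range.mp (Finset.mem_of_mem_erase hi)
        linarith [hp i him]
      · rw [← Finset.card_pos, Finset.card_erase_of_mem (Finset.mem_range.mpr hj),
          Finset.card_range]
        omega
    have hSp : ∀ j, j < m → 0 < S j + p j := by
      intro j hj
      rw [hSeq j hj]
      linarith [hsum]
    have hQ : ∀ j, j < m → ∀ t : ℕ,
        -1 < p ((j+1+t) % m) + (1 + p ((j+1+t) % m)) / S j * p j := by
      intro j hj t
      have hw : (j+1+t) % m < m := Nat.mod_lt _ hm0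
      have h1 : 0 < 1 + p ((j+1+t) % m) := by linarith [hp _ hw]
      have hkey : 0 < (1 + p ((j+1+t) % m)) * ((S j + p j) / S j) :=
        mul_pos h1 (div_pos (hSp j hj) (hSpos j hj))
      have hSne := (hSpos j hj).ne'
      have expand : (1 + p ((j+1+t) % m)) * ((S j + p j) / S j) =
          1 + (p ((j+1+t) % m) + (1 + p ((j+1+t) % m)) / S j * p j) := by
        field_simp
        ring
      rw [expand] at hkey
      linarith
    have hptB : ∀ (x : Fin m → ℝ) (j : ℕ), j < m →
        (∀ i, i < m → |cyc x i - cyc x (i+1)| ≤ |cyc x j - cyc x (j+1)|) →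
        (∏ i ∈ Finset.range m, |cyc x i - cyc x (i+1)| ^ p i) ≤
        ∏ t ∈ Finset.range (m-1), |cyc x ((j+1+t) % m) - cyc x ((j+1+t) % m + 1)| ^
          (p ((j+1+t) % m) + (1 + p ((j+1+t) % m)) / S j * p j) := by
      intro x j hj hmax
      rw [w_reindex hj (fun i => |cyc x i - cyc x (i+1)| ^ (p i + (1 + p i) / S j * p j))]
      by_cases hz : ∀ i, i < m → 0 < |cyc x i - cyc x (i+1)|
      · have hjpos := hz j hj
        have hsum1 : ∑ i ∈ (Finset.range m).erase j, (1 + p i) / S j = 1 := by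
          rw [← Finset.sum_div]
          exact div_self (hSpos j hj).ne'
        have hEj : |cyc x j - cyc x (j+1)| ^ p j =
            ∏ i ∈ (Finset.range m).erase j, |cyc x j - cyc x (j+1)| ^ ((1 + p i) / S j * p j) := by
          rw [← Real.rpow_sum_of_pos hjpos, ← Finset.sum_mul, hsum1, one_mul]
        have hle1 : (∏ i ∈ (Finset.range m).erase j,
              |cyc x j - cyc x (j+1)| ^ ((1 + p i) / S j * p j)) ≤
            ∏ i ∈ (Finset.range m).erase j, |cyc x i - cyc x (i+1)| ^ ((1 + p i) / S j * p j) := by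
          apply Finset.prod_le_prod
          · intro i _; exact Real.rpow_nonneg (abs_nonneg _) _
          · intro i hi
            have him : i < m := Finset.mem_range.mp (Finset.mem_of_mem_erase hi)
            apply Real.rpow_le_rpow_of_nonpos (hz i him) (hmax i him)
            apply mul_nonpos_of_nonneg_of_nonpos
            · exact div_nonneg (by linarith [hp i him]) (hSpos j hj).le
            · exact (hA j hj).le
        calc ∏ i ∈ Finset.range m, |cyc x i - cyc x (i+1)| ^ p i
            = |cyc x j - cyc x (j+1)| ^ p j *
              ∏ i ∈ (Finset.range m).erase j, |cyc x i - cyc x (i+1)| ^ p i :=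
              (Finset.mul_prod_erase _ _ (Finset.mem_range.mpr hj)).symm
          _ ≤ (∏ i ∈ (Finset.range m).erase j,
                |cyc x i - cyc x (i+1)| ^ ((1 + p i) / S j * p j)) *
              ∏ i ∈ (Finset.range m).erase j, |cyc x i - cyc x (i+1)| ^ p i :=
              mul_le_mul_of_nonneg_right (hEj.trans_le hle1)
                (Finset.prod_nonneg fun i _ => Real.rpow_nonneg (abs_nonneg _) _)
          _ = ∏ i ∈ (Finset.range m).erase j,
                |cyc x i - cyc x (i+1)| ^ (p i + (1 + p i) / S j * p j) := by
              rw [← Finset.prod_mul_distrib]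
              apply Finset.prod_congr rfl
              intro i hi
              have him : i < m := Finset.mem_range.mp (Finset.mem_of_mem_erase hi)
              rw [← Real.rpow_add (hz i him)]
              congr 1
              ring
      · push_neg at hz
        obtain ⟨i0, hi0m, hi0⟩ := hz
        have hi0' : |cyc x i0 - cyc x (i0+1)| = 0 := le_antisymm hi0 (abs_nonneg _)
        have hzero : ∏ i ∈ Finset.range m, |cyc x i - cyc x (i+1)| ^ p i = 0 := by
          apply Finset.prod_eq_zero (Finset.mem_range.mpr hi0m)
          rw [hi0', Real.zero_rpow (hA i0 hi0m).ne]
        rw [hzero]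
        exact Finset.prod_nonneg fun i _ => Real.rpow_nonneg (abs_nonneg _) _
    have cover : ∀ x : Fin m → ℝ, ∃ j, j < m ∧ ∀ i, i < m →
        |cyc x i - cyc x (i+1)| ≤ |cyc x j - cyc x (j+1)| := by
      intro x
      obtain ⟨j, hjmem, hjmax⟩ := Finset.exists_max_image (Finset.range m)
        (fun i => |cyc x i - cyc x (i+1)|) ⟨0, Finset.mem_range.mpr hm0⟩
      exact ⟨j, Finset.mem_range.mp hjmem, fun i hi => hjmax i (Finset.mem_range.mpr hi)⟩
    set G : ℕ → (Fin m → ℝ) → ENNReal := fun j x => ∏ t ∈ Finset.range (m-1),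
      ENNReal.ofReal (|x (⟨(j+1+t) % m, Nat.mod_lt _ hm0⟩ : Fin m) -
        x (⟨(j+1+(t+1)) % m, Nat.mod_lt _ hm0⟩ : Fin m)| ^
        (p ((j+1+t) % m) + (1 + p ((j+1+t) % m)) / S j * p j)) with hG
    have hGm : ∀ j : ℕ, Measurable (G j) := by
      intro j; rw [hG]; fun_prop
    calc ∫⁻ x, ENNReal.ofReal (∏ i ∈ Finset.range m, |cyc x i - cyc x (i+1)| ^ p i)
          ∂(Measure.pi fun _ : Fin m => volume.restrict (Set.Icc (0:ℝ) 1))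
        ≤ ∫⁻ x, (∑ j ∈ Finset.range m, G j x)
            ∂(Measure.pi fun _ : Fin m => volume.restrict (Set.Icc (0:ℝ) 1)) := by
          apply lintegral_mono
          intro x
          obtain ⟨j, hj, hmax⟩ := cover x
          refine le_trans ?_ (Finset.single_le_sum (f := fun j => G j x)
            (fun _ _ => zero_le) (Finset.mem_range.mpr hj))
          refine le_trans (ENNReal.ofReal_le_ofReal (hptB x j hj hmax)) ?_
          rw [ENNReal.ofReal_prod_of_nonneg (fun t _ => Real.rpow_nonneg (abs_nonneg _) _)]
          exact le_of_eq (Finset.prod_congr rfl fun t _ => by rw [hconv x j t])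
      _ = ∑ j ∈ Finset.range m, ∫⁻ x, G j x
            ∂(Measure.pi fun _ : Fin m => volume.restrict (Set.Icc (0:ℝ) 1)) :=
          lintegral_finset_sum _ (fun j _ => hGm j)
      _ < ⊤ := by
          rw [ENNReal.sum_lt_top]
          intro j hj
          exact chain m hm0 (fun t => ⟨(j+1+t) % m, Nat.mod_lt _ hm0⟩) (hvinj j)
            (fun t => p ((j+1+t) % m) + (1 + p ((j+1+t) % m)) / S j * p j)
            (fun t _ => hQ j (Finset.mem_range.mp hj) t)
end

section
/- Let m ≥ 2 be an integer and H ∈ ((m+1)/(2m), 1). Then B_m(2H-2, ..., 2H-2) = ∫_{[0,1]^m} |x_1-x_2|^{2H-2}|x_2-x_3|^{2H-2}⋯|x_m-x_1|^{2H-2} dx_1⋯dx_m is finite. -/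
open MeasureTheory Real

section Aux

open Set Finset intervalIntegral
open scoped ENNReal

lemma cyc_apply {m : ℕ} (h : 0 < m) (x : Fin m → ℝ) (n : ℕ) :
    cyc x n = x ⟨n % m, Nat.mod_lt n h⟩ := by simp [cyc, h]

lemma cyc_eq {m : ℕ} (x : Fin m → ℝ) {n : ℕ} (h : n < m) : cyc x n = x ⟨n, h⟩ := by
  have h0 : 0 < m := lt_of_le_of_lt (Nat.zero_le n) h
  simp [cyc, h0, Nat.mod_eq_of_lt h]

lemma cyc_mod {m : ℕ} (h : 0 < m) (x : Fin m → ℝ) (a : ℕ) :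
    cyc x (a % m) = cyc x a := by
  rw [cyc_apply h, cyc_apply h]
  congr 1
  exact Fin.ext (Nat.mod_eq_of_lt (Nat.mod_lt a h))

lemma cyc_mod_add_one {m : ℕ} (h : 0 < m) (x : Fin m → ℝ) (a : ℕ) :
    cyc x (a % m + 1) = cyc x (a + 1) := by
  rw [cyc_apply h, cyc_apply h]
  congr 1
  exact Fin.ext (Nat.mod_add_mod a m 1)

lemma mod_two_cases {a m : ℕ} (h0 : 0 < m) (h : a < 2*m) :
    a % m = if a < m then a else a - m := by
  split_ifs with hlt
  · exact Nat.mod_eq_of_lt hlt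
  · rw [Nat.mod_eq_sub_mod (le_of_not_gt hlt), Nat.mod_eq_of_lt (by omega)]

lemma measurable_cycProd {m : ℕ} (q : ℝ) (s : Finset ℕ) :
    Measurable fun y : Fin m → ℝ =>
      ∏ k ∈ s, ENNReal.ofReal (|cyc y k - cyc y (k+1)| ^ q) := by
  rcases Nat.eq_zero_or_pos m with hm | hm
  · subst hm
    simp only [cyc, dif_neg (lt_irrefl 0)]
    exact measurable_const
  · apply Finset.measurable_prod
    intro k _
    simp only [cyc, dif_pos hm]
    measurability

noncomputable def μ₁ : Measure ℝ := volume.restrict (Set.Icc (0:ℝ) 1)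

instance : IsProbabilityMeasure μ₁ := ⟨by simp [μ₁]⟩

theorem pi_restrict_eq {ι : Type*} [Fintype ι] {α : ι → Type*} [∀ i, MeasurableSpace (α i)]
    (μ : ∀ i, Measure (α i)) [∀ i, SigmaFinite (μ i)] (s : ∀ i, Set (α i))
    (ht : ∀ i, MeasurableSet (s i)) [∀ i, SigmaFinite ((μ i).restrict (s i))] :
    (Measure.pi μ).restrict (Set.univ.pi s) = Measure.pi (fun i => (μ i).restrict (s i)) := by
  refine (Measure.pi_eq fun t ht => ?_).symm
  rw [Measure.restrict_apply (MeasurableSet.univ_pi ht), ← Set.pi_inter_distrib,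
    Measure.pi_pi]
  simp_rw [← Measure.restrict_apply (ht _)]

lemma one_dim {q : ℝ} (hq : -1 < q) {v : ℝ} (hv : v ∈ Icc (0:ℝ) 1) :
    ∫⁻ t in Icc (0:ℝ) 1, ENNReal.ofReal (|v - t| ^ q) ≤ ENNReal.ofReal (2/(q+1)) := by
  obtain ⟨hv0, hv1⟩ := hv
  have hq1 : 0 < q + 1 := by linarith
  have Ia : IntervalIntegrable (fun t : ℝ => |v - t| ^ q) volume 0 v := by
    have h := (intervalIntegrable_rpow' hq (a := v) (b := 0)).comp_sub_left v
    simp only [sub_self, sub_zero] at h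
    apply h.congr
    intro t ht
    dsimp only
    rw [uIoc_of_le hv0] at ht
    rw [abs_of_nonneg (by linarith [ht.2])]
  have Ib : IntervalIntegrable (fun t : ℝ => |v - t| ^ q) volume v 1 := by
    have h := (intervalIntegrable_rpow' hq (a := 0) (b := 1 - v)).comp_sub_right v
    simp only [zero_add, sub_add_cancel] at h
    apply h.congr
    intro t ht
    dsimp only
    rw [uIoc_of_le hv1] at ht
    rw [abs_sub_comm, abs_of_nonneg (by linarith [ht.1.le])]
  have Iab : IntegrableOn (fun t : ℝ => |v - t| ^ q) (Icc 0 1) volume := by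
    rw [← Set.Icc_union_Icc_eq_Icc hv0 hv1]
    refine (IntegrableOn.union ?_ ?_)
    · exact (integrableOn_Icc_iff_integrableOn_Ioc (f := fun t : ℝ => |v - t| ^ q)).mpr Ia.1
    · exact (integrableOn_Icc_iff_integrableOn_Ioc (f := fun t : ℝ => |v - t| ^ q)).mpr Ib.1
  rw [← ofReal_integral_eq_lintegral_ofReal Iab]
  · apply ENNReal.ofReal_le_ofReal
    rw [MeasureTheory.integral_Icc_eq_integral_Ioc,
      ← intervalIntegral.integral_of_le (by linarith : (0:ℝ) ≤ 1),
      ← intervalIntegral.integral_add_adjacent_intervals Ia Ib]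
    have e1 : ∫ t in (0:ℝ)..v, |v - t| ^ q = v ^ (q+1) / (q+1) := by
      have : ∀ t ∈ uIcc (0:ℝ) v, |v - t| ^ q = (v - t) ^ q := by
        intro t ht
        rw [uIcc_of_le hv0] at ht
        rw [abs_of_nonneg (by linarith [ht.2])]
      rw [intervalIntegral.integral_congr this,
        intervalIntegral.integral_comp_sub_left (fun x => x ^ q) v,
        sub_self, sub_zero, integral_rpow (Or.inl hq)]
      simp [Real.zero_rpow (by linarith : q + 1 ≠ 0)]
    have e2 : ∫ t in v..(1:ℝ), |v - t| ^ q = (1-v) ^ (q+1) / (q+1) := by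
      have : ∀ t ∈ uIcc v (1:ℝ), |v - t| ^ q = (t - v) ^ q := by
        intro t ht
        rw [uIcc_of_le hv1] at ht
        rw [abs_sub_comm, abs_of_nonneg (by linarith [ht.1])]
      rw [intervalIntegral.integral_congr this,
        intervalIntegral.integral_comp_sub_right (fun x => x ^ q) v,
        sub_self, integral_rpow (Or.inl hq)]
      simp [Real.zero_rpow (by linarith : q + 1 ≠ 0)]
    rw [e1, e2, ← add_div, div_le_div_iff_of_pos_right hq1]
    have b1 : v ^ (q+1) ≤ 1 := Real.rpow_le_one hv0 hv1 hq1.le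
    have b2 : (1-v) ^ (q+1) ≤ 1 := Real.rpow_le_one (by linarith) (by linarith) hq1.le
    linarith
  · filter_upwards with t
    positivity

lemma chain_bound {q : ℝ} (hq : -1 < q) : ∀ n : ℕ,
    ∫⁻ y : Fin (n+1) → ℝ, (∏ k ∈ Finset.range n, ENNReal.ofReal (|cyc y k - cyc y (k+1)| ^ q))
      ∂(Measure.pi fun _ : Fin (n+1) => μ₁)
      ≤ (ENNReal.ofReal (2/(q+1))) ^ n := by
  intro n
  induction n with
  | zero => simp
  | succ n ih =>
    set C := ENNReal.ofReal (2/(q+1)) with hC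
    have hCne : C ≠ ⊤ := ENNReal.ofReal_ne_top
    set e := MeasurableEquiv.piFinSuccAbove (fun _ : Fin (n+2) => ℝ) (Fin.last (n+1)) with he
    have mp := (measurePreserving_piFinSuccAbove (fun _ : Fin (n+2) => μ₁) (Fin.last (n+1)))
    set F : (Fin (n+2) → ℝ) → ℝ≥0∞ :=
      fun y => ∏ k ∈ Finset.range (n+1), ENNReal.ofReal (|cyc y k - cyc y (k+1)| ^ q) with hF
    have hFm : Measurable F := measurable_cycProd q _
    have key : ∫⁻ y, F y ∂(Measure.pi fun _ : Fin (n+2) => μ₁)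
        = ∫⁻ p : ℝ × (Fin (n+1) → ℝ), F (e.symm p)
            ∂(μ₁.prod (Measure.pi fun _ : Fin (n+1) => μ₁)) := by
      rw [(mp.symm e).lintegral_comp_emb e.symm.measurableEmbedding]
    rw [key, lintegral_prod_symm' (fun p => F (e.symm p)) (hFm.comp e.symm.measurable)]
    have hsymm : ∀ (t : ℝ) (z : Fin (n+1) → ℝ), F (e.symm (t, z)) =
        (∏ k ∈ Finset.range n, ENNReal.ofReal (|cyc z k - cyc z (k+1)| ^ q))
          * ENNReal.ofReal (|cyc z n - t| ^ q) := by
      intro t z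
      have hy : e.symm (t, z) = Fin.snoc z t := by
        simp [he, MeasurableEquiv.piFinSuccAbove, Fin.insertNth_last', Fin.snocEquiv]
      simp only [hF, hy]
      rw [Finset.prod_range_succ]
      congr 1
      · apply Finset.prod_congr rfl
        intro k hk
        have hk' : k < n := Finset.mem_range.mp hk
        rw [cyc_eq _ (show k < n+2 by omega), cyc_eq _ (show k+1 < n+2 by omega),
          cyc_eq _ (show k < n+1 by omega), cyc_eq _ (show k+1 < n+1 by omega)]
        have h1 : (⟨k, by omega⟩ : Fin (n+2)) = Fin.castSucc ⟨k, by omega⟩ := rfl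
        have h2 : (⟨k+1, by omega⟩ : Fin (n+2)) = Fin.castSucc ⟨k+1, by omega⟩ := rfl
        rw [h1, h2, Fin.snoc_castSucc, Fin.snoc_castSucc]
      · rw [cyc_eq _ (show n < n+2 by omega), cyc_eq _ (show n+1 < n+2 by omega),
          cyc_eq _ (show n < n+1 by omega)]
        have h1 : (⟨n, by omega⟩ : Fin (n+2)) = Fin.castSucc ⟨n, by omega⟩ := rfl
        have h2 : (⟨n+1, by omega⟩ : Fin (n+2)) = Fin.last (n+1) := rfl
        rw [h1, h2, Fin.snoc_castSucc, Fin.snoc_last]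
    simp_rw [hsymm]
    have hae : ∀ᵐ z ∂(Measure.pi fun _ : Fin (n+1) => μ₁),
        z ∈ Set.univ.pi (fun _ : Fin (n+1) => Icc (0:ℝ) 1) := by
      simp only [μ₁]
      rw [← pi_restrict_eq (fun _ => volume) (fun _ => Icc (0:ℝ) 1) (fun _ => measurableSet_Icc)]
      exact ae_restrict_mem (MeasurableSet.univ_pi fun _ => measurableSet_Icc)
    calc
      ∫⁻ z, ∫⁻ t, (∏ k ∈ Finset.range n, ENNReal.ofReal (|cyc z k - cyc z (k+1)| ^ q))
            * ENNReal.ofReal (|cyc z n - t| ^ q) ∂μ₁ ∂(Measure.pi fun _ : Fin (n+1) => μ₁)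
        ≤ ∫⁻ z, (∏ k ∈ Finset.range n, ENNReal.ofReal (|cyc z k - cyc z (k+1)| ^ q)) * C
            ∂(Measure.pi fun _ : Fin (n+1) => μ₁) := by
          apply lintegral_mono_ae
          filter_upwards [hae] with z hz
          rw [lintegral_const_mul' _ _ (by
            exact (ENNReal.prod_lt_top (fun k _ => ENNReal.ofReal_lt_top)).ne)]
          apply mul_le_mul_right
          rw [cyc_eq _ (show n < n+1 by omega)]
          exact one_dim hq (hz (⟨n, by omega⟩ : Fin (n+1)) trivial)
      _ = (∫⁻ z, (∏ k ∈ Finset.range n, ENNReal.ofReal (|cyc z k - cyc z (k+1)| ^ q))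
            ∂(Measure.pi fun _ : Fin (n+1) => μ₁)) * C := lintegral_mul_const' _ _ hCne
      _ ≤ C ^ n * C := mul_le_mul_left ih _
      _ = C ^ (n+1) := by rw [pow_succ]

lemma amgm_cyc {m : ℕ} (hm : 2 ≤ m) {p : ℝ} (hp : p ≠ 0) (a : ℕ → ℝ)
    (ha : ∀ i, 0 ≤ a i) :
    ∏ i ∈ range m, a i ^ p ≤
      ∑ j ∈ range m, (1 / (m:ℝ)) * ∏ i ∈ (range m).erase j, a i ^ ((m:ℝ) * p / ((m:ℝ) - 1)) := by
  set q : ℝ := (m:ℝ) * p / ((m:ℝ) - 1) with hqdef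
  have hm2 : (2:ℝ) ≤ m := by exact_mod_cast hm
  have hm0 : (0:ℝ) < m := by linarith
  have hm1 : (0:ℝ) < (m:ℝ) - 1 := by linarith
  by_cases hz : ∃ i ∈ range m, a i = 0
  · obtain ⟨i, hi, hai⟩ := hz
    rw [Finset.prod_eq_zero hi (by rw [hai]; exact Real.zero_rpow hp)]
    apply Finset.sum_nonneg
    intro j _
    exact mul_nonneg (by positivity)
      (Finset.prod_nonneg fun i _ => Real.rpow_nonneg (ha i) _)
  push_neg at hz
  have hpos : ∀ i ∈ range m, 0 < a i := fun i hi => lt_of_le_of_ne (ha i) (Ne.symm (hz i hi))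
  set P : ℝ := ∏ i ∈ range m, a i with hPdef
  have hPpos : 0 < P := Finset.prod_pos hpos
  have key := Real.geom_mean_le_arith_mean_weighted (range m)
    (fun _ => 1 / (m:ℝ)) (fun j => ∏ i ∈ (range m).erase j, a i ^ q)
    (fun i _ => by positivity)
    (by
      rw [Finset.sum_const, Finset.card_range, nsmul_eq_mul]
      field_simp)
    (fun j _ => Finset.prod_nonneg fun i _ => Real.rpow_nonneg (ha i) _)
  refine le_trans (le_of_eq ?_) key
  have hprod_erase : ∀ j ∈ range m, ∏ i ∈ (range m).erase j, a i ^ q = (P / a j) ^ q := by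
    intro j hj
    rw [Real.finset_prod_rpow _ _ (fun i _ => ha i) q]
    congr 1
    rw [eq_div_iff (ne_of_gt (hpos j hj)), Finset.prod_erase_mul _ _ hj]
  have hexp : ((m:ℝ) - 1) * (q * (1/(m:ℝ))) = p := by
    rw [hqdef]; field_simp
  symm
  calc ∏ j ∈ range m, (∏ i ∈ (range m).erase j, a i ^ q) ^ (1/(m:ℝ))
      = ∏ j ∈ range m, ((P / a j) ^ q) ^ (1/(m:ℝ)) :=
        Finset.prod_congr rfl fun j hj => by rw [hprod_erase j hj]
    _ = ∏ j ∈ range m, (P / a j) ^ (q * (1/(m:ℝ))) :=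
        Finset.prod_congr rfl fun j hj =>
          (Real.rpow_mul (le_of_lt (div_pos hPpos (hpos j hj))) _ _).symm
    _ = (∏ j ∈ range m, (P / a j)) ^ (q * (1/(m:ℝ))) :=
        Real.finset_prod_rpow _ _ (fun j hj => le_of_lt (div_pos hPpos (hpos j hj))) _
    _ = (P ^ ((m:ℝ) - 1)) ^ (q * (1/(m:ℝ))) := by
        rw [Finset.prod_div_distrib, Finset.prod_const, Finset.card_range,
          Real.rpow_sub hPpos, Real.rpow_one, Real.rpow_natCast]
    _ = P ^ (((m:ℝ) - 1) * (q * (1/(m:ℝ)))) := (Real.rpow_mul hPpos.le _ _).symm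
    _ = P ^ p := by rw [hexp]
    _ = ∏ i ∈ range m, a i ^ p := (Real.finset_prod_rpow _ _ (fun i _ => ha i) p).symm

lemma reindex_prod {n : ℕ} (hn : 1 ≤ n) {j : ℕ} (hj : j < n + 1) (G : ℝ → ENNReal)
    (x : Fin (n+1) → ℝ) :
    ∏ i ∈ (range (n+1)).erase j, G (cyc x i - cyc x (i+1))
      = ∏ k ∈ range n, G (cyc (fun t : Fin (n+1) => x ((⟨j, hj⟩ : Fin (n+1)) + 1 + t)) k
          - cyc (fun t : Fin (n+1) => x ((⟨j, hj⟩ : Fin (n+1)) + 1 + t)) (k+1)) := by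
  have h0 : 0 < n + 1 := by omega
  have h1v : ((1 : Fin (n+1)) : ℕ) = 1 := by
    rw [Fin.val_one']; exact Nat.mod_eq_of_lt (by omega)
  have hcyc : ∀ k : ℕ, cyc (fun t : Fin (n+1) => x ((⟨j, hj⟩ : Fin (n+1)) + 1 + t)) k
      = cyc x (j + 1 + k) := by
    intro k
    rw [cyc_apply h0, cyc_apply h0]
    apply congrArg x
    apply Fin.ext
    simp only [Fin.add_def, h1v]
    rw [Nat.add_mod_mod, Nat.mod_add_mod]
  symm
  refine Finset.prod_nbij' (fun k => (j + 1 + k) % (n+1)) (fun i => (i + (n+1) - 1 - j) % (n+1))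
    ?_ ?_ ?_ ?_ ?_
  · intro k hk
    rw [Finset.mem_range] at hk
    rw [Finset.mem_erase, Finset.mem_range]
    rw [mod_two_cases h0 (by omega)]
    constructor
    · split_ifs <;> omega
    · split_ifs <;> omega
  · intro i hi
    rw [Finset.mem_erase, Finset.mem_range] at hi
    obtain ⟨hij, him⟩ := hi
    rw [Finset.mem_range, mod_two_cases h0 (by omega)]
    split_ifs <;> omega
  · intro k hk
    rw [Finset.mem_range] at hk
    have hs := mod_two_cases h0 (show j + 1 + k < 2*(n+1) by omega)
    set s := (j + 1 + k) % (n+1) with hsdef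
    have hsm : s < n + 1 := Nat.mod_lt _ h0
    rw [mod_two_cases h0 (by omega : s + (n+1) - 1 - j < 2*(n+1))]
    split_ifs at hs ⊢ <;> omega
  · intro i hi
    rw [Finset.mem_erase, Finset.mem_range] at hi
    obtain ⟨hij, him⟩ := hi
    have hr := mod_two_cases h0 (show i + (n+1) - 1 - j < 2*(n+1) by omega)
    set r := (i + (n+1) - 1 - j) % (n+1) with hrdef
    have hrm : r < n + 1 := Nat.mod_lt _ h0
    rw [mod_two_cases h0 (by omega : j + 1 + r < 2*(n+1))]
    split_ifs at hr ⊢ <;> omega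
  · intro k hk
    rw [hcyc k, hcyc (k+1), show j + 1 + (k+1) = (j+1+k)+1 from by omega,
      cyc_mod h0, cyc_mod_add_one h0]

end Aux

theorem cyclic_integral_finite_equal_exponents (m : ℕ) (hm : 2 ≤ m) (H : ℝ)
    (hH : (m + 1) / (2 * m) < H) (hH1 : H < 1) :
    (∫⁻ x in Set.univ.pi (fun _ : Fin m => Set.Icc (0 : ℝ) 1),
        ENNReal.ofReal (∏ i ∈ Finset.range m,
          |cyc x i - cyc x (i + 1)| ^ (2 * H - 2))) < ⊤ := by
  obtain ⟨n, rfl⟩ : ∃ n, m = n + 1 := ⟨m - 1, by omega⟩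
  have hn : 1 ≤ n := by omega
  set p : ℝ := 2 * H - 2 with hpdef
  set q : ℝ := (((n+1 : ℕ)):ℝ) * p / ((((n+1 : ℕ)):ℝ) - 1) with hqdef
  have hN1 : (1:ℝ) ≤ (n:ℝ) := by exact_mod_cast hn
  have hH' : ((n:ℝ) + 1 + 1) < H * (2 * ((n:ℝ) + 1)) := by
    have hden : (0:ℝ) < 2 * (((n+1:ℕ)):ℝ) := by push_cast; linarith
    rw [div_lt_iff₀ hden] at hH
    push_cast at hH ⊢
    linarith
  have hq1 : -1 < q := by
    rw [hqdef, lt_div_iff₀ (by push_cast; linarith : (0:ℝ) < (((n+1:ℕ)):ℝ) - 1)]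
    push_cast
    nlinarith
  have hp0 : p ≠ 0 := by rw [hpdef]; intro h; nlinarith
  have hmeas : (volume : Measure (Fin (n+1) → ℝ)).restrict
      (Set.univ.pi fun _ : Fin (n+1) => Set.Icc (0:ℝ) 1)
      = Measure.pi (fun _ : Fin (n+1) => μ₁) := by
    rw [MeasureTheory.volume_pi,
      pi_restrict_eq (fun _ => volume) (fun _ => Set.Icc (0:ℝ) 1) (fun _ => measurableSet_Icc)]
    rfl
  rw [hmeas]
  have hbound : ∀ x : Fin (n+1) → ℝ,
      ENNReal.ofReal (∏ i ∈ Finset.range (n+1), |cyc x i - cyc x (i+1)| ^ p)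
        ≤ ∑ j ∈ Finset.range (n+1), ENNReal.ofReal (1/(((n+1:ℕ)):ℝ)) *
            ∏ i ∈ (Finset.range (n+1)).erase j,
              ENNReal.ofReal (|cyc x i - cyc x (i+1)| ^ q) := by
    intro x
    have h1 := amgm_cyc hm hp0 (fun i => |cyc x i - cyc x (i+1)|) (fun i => abs_nonneg _)
    refine le_trans (ENNReal.ofReal_le_ofReal h1) (le_of_eq ?_)
    rw [ENNReal.ofReal_sum_of_nonneg (fun j _ => mul_nonneg (by positivity)
      (Finset.prod_nonneg fun i _ => Real.rpow_nonneg (abs_nonneg _) _))]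
    refine Finset.sum_congr rfl fun j _ => ?_
    rw [ENNReal.ofReal_mul (by positivity),
      ENNReal.ofReal_prod_of_nonneg (fun i _ => Real.rpow_nonneg (abs_nonneg _) _)]
  refine lt_of_le_of_lt (lintegral_mono hbound) ?_
  rw [lintegral_finset_sum _
    (fun j _ => Measurable.const_mul (measurable_cycProd q _) _)]
  refine ENNReal.sum_lt_top.mpr (fun j hj => ?_)
  have hjlt : j < n + 1 := Finset.mem_range.mp hj
  rw [lintegral_const_mul' _ _ ENNReal.ofReal_ne_top]
  set c : Fin (n+1) := (⟨j, hjlt⟩ : Fin (n+1)) + 1 with hc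
  set Gfun : (Fin (n+1) → ℝ) → ENNReal :=
    fun y => ∏ k ∈ Finset.range n, ENNReal.ofReal (|cyc y k - cyc y (k+1)| ^ q) with hG
  set Φ := (MeasurableEquiv.piCongrLeft (fun _ : Fin (n+1) => ℝ) (Equiv.addLeft c)).symm with hΦ
  have hmp : MeasurePreserving Φ (Measure.pi fun _ : Fin (n+1) => μ₁)
      (Measure.pi fun _ : Fin (n+1) => μ₁) :=
    (measurePreserving_piCongrLeft (fun _ : Fin (n+1) => μ₁) (Equiv.addLeft c)).symm _
  have hint : ∫⁻ x, Gfun (Φ x) ∂(Measure.pi fun _ : Fin (n+1) => μ₁)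
      = ∫⁻ y, Gfun y ∂(Measure.pi fun _ : Fin (n+1) => μ₁) :=
    hmp.lintegral_comp_emb Φ.measurableEmbedding Gfun
  have hfe : ∀ x : Fin (n+1) → ℝ,
      (∏ i ∈ (Finset.range (n+1)).erase j, ENNReal.ofReal (|cyc x i - cyc x (i+1)| ^ q))
        = Gfun (Φ x) := by
    intro x
    have hys : Φ x = fun t => x (c + t) := by
      funext t
      show (Equiv.piCongrLeft (fun _ : Fin (n+1) => ℝ) (Equiv.addLeft c)).symm x t = x (c + t)
      rw [Equiv.piCongrLeft_symm_apply]
      rfl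
    rw [hys, hG]
    exact reindex_prod hn hjlt (fun r => ENNReal.ofReal (|r| ^ q)) x
  calc ENNReal.ofReal (1/(((n+1:ℕ)):ℝ)) *
        ∫⁻ x, ∏ i ∈ (Finset.range (n+1)).erase j,
          ENNReal.ofReal (|cyc x i - cyc x (i+1)| ^ q) ∂(Measure.pi fun _ : Fin (n+1) => μ₁)
      = ENNReal.ofReal (1/(((n+1:ℕ)):ℝ)) *
        ∫⁻ y, Gfun y ∂(Measure.pi fun _ : Fin (n+1) => μ₁) := by
        rw [← hint]
        congr 1
        exact lintegral_congr hfe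
    _ ≤ ENNReal.ofReal (1/(((n+1:ℕ)):ℝ)) * (ENNReal.ofReal (2/(q+1))) ^ n :=
        mul_le_mul_right (chain_bound hq1 n) _
    _ < ⊤ := ENNReal.mul_lt_top ENNReal.ofReal_lt_top
        (ENNReal.pow_lt_top ENNReal.ofReal_lt_top)
end

section
/- Let θ > 0, H ∈ (1/2, 1), and define the double integral I_T^{(2,2)} = ∫_{[0,T]²} e^{-θx_2} |x_2 - T|^{2H-2} e^{-θ(T - x_4)} |x_4|^{2H-2} dx_2 dx_4. Then T^{4-4H} I_T^{(2,2)} → θ^{-2} as T → ∞. -/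
open MeasureTheory Real Filter intervalIntegral

lemma kernel_intble {θ H : ℝ} (hr : -1 < 2*H-2) (T a b : ℝ) :
    IntervalIntegrable (fun x => Real.exp (-θ*x) * (T - x)^(2*H-2)) volume a b := by
  have h1 : IntervalIntegrable (fun x : ℝ => x ^ (2*H-2)) volume (T - a) (T - b) :=
    intervalIntegrable_rpow' hr
  have h2 := h1.comp_sub_left T
  simp only [sub_sub_cancel] at h2
  exact h2.continuousOn_mul ((Real.continuous_exp.comp (by continuity)).continuousOn)

lemma exp_int {θ : ℝ} (hθ : 0 < θ) (T : ℝ) :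
    ∫ x in (0:ℝ)..T, Real.exp (-θ*x) = (1 - Real.exp (-θ*T))/θ := by
  have h : (∫ x in (0:ℝ)..T, Real.exp ((-θ)*x))
      = (-θ)⁻¹ • ∫ x in ((-θ)*0)..((-θ)*T), Real.exp x :=
    integral_comp_mul_left Real.exp (neg_ne_zero.2 hθ.ne')
  rw [integral_exp] at h
  simp only [mul_zero, Real.exp_zero, smul_eq_mul] at h
  rw [h, eq_div_iff hθ.ne', inv_neg]
  have hc : θ⁻¹ * θ = 1 := inv_mul_cancel₀ hθ.ne'
  linear_combination (1 - Real.exp (-θ*T)) * hc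

lemma lower_bd {θ H T : ℝ} (hθ : 0 < θ) (hH : H ∈ Set.Ioo (1/2 : ℝ) 1) (hT : 0 < T) :
    (1 - Real.exp (-θ*T))/θ ≤ T^(2-2*H) * ∫ x in (0:ℝ)..T, Real.exp (-θ*x) * (T-x)^(2*H-2) := by
  have hr : -1 < 2*H-2 := by linarith [hH.1]
  rw [← exp_int hθ T, ← intervalIntegral.integral_const_mul]
  refine intervalIntegral.integral_mono_ae_restrict hT.le
    ((Real.continuous_exp.comp (by continuity)).intervalIntegrable 0 T)
    ((kernel_intble hr T 0 T).const_mul _) ?_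
  have hne : ∀ᵐ (x:ℝ), x ≠ T := by
    rw [ae_iff]
    simp only [not_not, Set.setOf_eq_eq_singleton]
    exact Real.volume_singleton
  filter_upwards [ae_restrict_of_ae hne, ae_restrict_mem measurableSet_Icc] with x hxne hx
  have hx2 : x < T := lt_of_le_of_ne hx.2 hxne
  have h0 : 0 < T - x := by linarith
  have h1 : T^(2*H-2) ≤ (T-x)^(2*H-2) :=
    Real.rpow_le_rpow_of_nonpos h0 (by linarith [hx.1]) (by linarith [hH.2])
  calc Real.exp (-θ*x) = Real.exp (-θ*x) * (T^(2-2*H) * T^(2*H-2)) := by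
        rw [← Real.rpow_add hT, show (2-2*H)+(2*H-2) = 0 by ring, Real.rpow_zero, mul_one]
    _ ≤ Real.exp (-θ*x) * (T^(2-2*H) * (T-x)^(2*H-2)) := by
        apply mul_le_mul_of_nonneg_left _ (Real.exp_nonneg _)
        exact mul_le_mul_of_nonneg_left h1 (Real.rpow_nonneg hT.le _)
    _ = T^(2-2*H) * (Real.exp (-θ*x) * (T-x)^(2*H-2)) := by ring

lemma upper_bd {θ H δ T : ℝ} (hθ : 0 < θ) (hH : H ∈ Set.Ioo (1/2 : ℝ) 1)
    (hδ : δ ∈ Set.Ioo (0:ℝ) 1) (hT : 0 < T) :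
    T^(2-2*H) * ∫ x in (0:ℝ)..T, Real.exp (-θ*x) * (T-x)^(2*H-2)
      ≤ (1-δ)^(2*H-2)/θ + Real.exp (-θ*(δ*T)) * T * (1-δ)^(2*H-1)/(2*H-1) := by
  have hr : -1 < 2*H-2 := by linarith [hH.1]
  have hH1 : 0 < 2*H-1 := by linarith [hH.1]
  have hδ0 : 0 < δ := hδ.1
  have hδ1 : δ < 1 := hδ.2
  have h1δ : 0 < 1 - δ := by linarith
  have hδT0 : 0 ≤ δ*T := by positivity
  have hδTT : δ*T ≤ T := by nlinarith
  have hTpos : 0 < T^(2-2*H) := Real.rpow_pos_of_pos hT _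
  rw [← intervalIntegral.integral_add_adjacent_intervals
      (kernel_intble hr T 0 (δ*T)) (kernel_intble hr T (δ*T) T), mul_add]
  have partA : T^(2-2*H) * ∫ x in (0:ℝ)..(δ*T), Real.exp (-θ*x) * (T-x)^(2*H-2)
      ≤ (1-δ)^(2*H-2)/θ := by
    have step1 : ∫ x in (0:ℝ)..(δ*T), Real.exp (-θ*x) * (T-x)^(2*H-2)
        ≤ ∫ x in (0:ℝ)..(δ*T), Real.exp (-θ*x) * ((1-δ)*T)^(2*H-2) := by
      refine intervalIntegral.integral_mono_on hδT0 (kernel_intble hr T 0 (δ*T))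
        (((Real.continuous_exp.comp (by continuity)).mul continuous_const).intervalIntegrable 0 (δ*T))
        fun x hx => ?_
      refine mul_le_mul_of_nonneg_left ?_ (Real.exp_nonneg _)
      exact Real.rpow_le_rpow_of_nonpos (by positivity) (by nlinarith [hx.2]) (by linarith [hH.2])
    have step2 : ∫ x in (0:ℝ)..(δ*T), Real.exp (-θ*x) * ((1-δ)*T)^(2*H-2)
        = ((1-δ)*T)^(2*H-2) * ((1 - Real.exp (-θ*(δ*T)))/θ) := by
      rw [← exp_int hθ (δ*T), ← intervalIntegral.integral_const_mul]
      congr 1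
      ext x
      ring
    calc T^(2-2*H) * ∫ x in (0:ℝ)..(δ*T), Real.exp (-θ*x) * (T-x)^(2*H-2)
        ≤ T^(2-2*H) * (((1-δ)*T)^(2*H-2) * ((1 - Real.exp (-θ*(δ*T)))/θ)) := by
          rw [← step2]; exact mul_le_mul_of_nonneg_left step1 hTpos.le
      _ ≤ T^(2-2*H) * (((1-δ)*T)^(2*H-2) * (1/θ)) := by
          gcongr
          linarith [Real.exp_nonneg (-θ*(δ*T))]
      _ = (1-δ)^(2*H-2)/θ := by
          rw [Real.mul_rpow h1δ.le hT.le]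
          have hTT : T^(2-2*H) * T^(2*H-2) = 1 := by
            rw [← Real.rpow_add hT, show (2-2*H)+(2*H-2) = 0 by ring, Real.rpow_zero]
          linear_combination ((1-δ)^(2*H-2)/θ) * hTT
  have hpow : IntervalIntegrable (fun x => (T - x)^(2*H-2)) volume (δ*T) T := by
    have h1 : IntervalIntegrable (fun x : ℝ => x ^ (2*H-2)) volume (T - δ*T) (T - T) :=
      intervalIntegrable_rpow' hr
    have h2 := h1.comp_sub_left T
    simpa only [sub_sub_cancel] using h2
  have partB : T^(2-2*H) * ∫ x in (δ*T)..T, Real.exp (-θ*x) * (T-x)^(2*H-2)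
      ≤ Real.exp (-θ*(δ*T)) * T * (1-δ)^(2*H-1)/(2*H-1) := by
    have step1 : ∫ x in (δ*T)..T, Real.exp (-θ*x) * (T-x)^(2*H-2)
        ≤ ∫ x in (δ*T)..T, Real.exp (-θ*(δ*T)) * (T-x)^(2*H-2) := by
      refine intervalIntegral.integral_mono_on hδTT (kernel_intble hr T (δ*T) T)
        (hpow.const_mul _) fun x hx => ?_
      refine mul_le_mul_of_nonneg_right ?_ (Real.rpow_nonneg (by linarith [hx.2]) _)
      exact Real.exp_le_exp.2 (by nlinarith [hx.1])
    have step2 : ∫ x in (δ*T)..T, Real.exp (-θ*(δ*T)) * (T-x)^(2*H-2)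
        = Real.exp (-θ*(δ*T)) * (((1-δ)*T)^(2*H-1)/(2*H-1)) := by
      rw [intervalIntegral.integral_const_mul]
      congr 1
      have hsub := intervalIntegral.integral_comp_sub_left (a := δ*T) (b := T)
        (fun u : ℝ => u ^ (2*H-2)) T
      rw [hsub, sub_self, integral_rpow (Or.inl hr)]
      rw [Real.zero_rpow (by linarith : (2*H-2)+1 ≠ 0)]
      rw [show T - δ*T = (1-δ)*T by ring, show (2*H-2)+1 = 2*H-1 by ring]
      ring
    calc T^(2-2*H) * ∫ x in (δ*T)..T, Real.exp (-θ*x) * (T-x)^(2*H-2)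
        ≤ T^(2-2*H) * (Real.exp (-θ*(δ*T)) * (((1-δ)*T)^(2*H-1)/(2*H-1))) := by
          rw [← step2]; exact mul_le_mul_of_nonneg_left step1 hTpos.le
      _ = Real.exp (-θ*(δ*T)) * T * (1-δ)^(2*H-1)/(2*H-1) := by
          rw [Real.mul_rpow h1δ.le hT.le]
          have hTT : T^(2-2*H) * T^(2*H-1) = T := by
            rw [← Real.rpow_add hT, show (2-2*H)+(2*H-1) = 1 by ring, Real.rpow_one]
          linear_combination (Real.exp (-θ*(δ*T)) * (1-δ)^(2*H-1) / (2*H-1)) * hTT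
  exact add_le_add partA partB

lemma L_tendsto {θ H : ℝ} (hθ : 0 < θ) (hH : H ∈ Set.Ioo (1/2 : ℝ) 1) :
    Tendsto (fun T : ℝ => T^(2-2*H) * ∫ x in (0:ℝ)..T, Real.exp (-θ*x) * (T-x)^(2*H-2))
      atTop (nhds θ⁻¹) := by
  rw [Metric.tendsto_nhds]
  intro ε hε
  -- choose δ
  have hcont : ContinuousAt (fun d : ℝ => (1-d)^(2*H-2)/θ) 0 := by
    have h1 : ContinuousAt (fun d : ℝ => 1-d) 0 := (continuous_const.sub continuous_id).continuousAt
    have h2 : ContinuousAt (fun y : ℝ => y^(2*H-2)) ((fun d : ℝ => 1-d) 0) := by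
      apply Real.continuousAt_rpow_const
      left; norm_num
    exact (h2.comp h1).div_const θ
  have hev : ∀ᶠ d in nhds (0:ℝ), (1-d)^(2*H-2)/θ < θ⁻¹ + ε/2 := by
    have h3 := hcont.tendsto
    norm_num [Real.one_rpow, one_div] at h3
    exact h3.eventually_lt_const (by linarith)
  have hmem : Set.Ioo (0:ℝ) 1 ∈ nhdsWithin (0:ℝ) (Set.Ioi 0) :=
    Ioo_mem_nhdsGT_of_mem ⟨le_refl 0, one_pos⟩
  obtain ⟨δ, hδlt, hδmem⟩ :=
    ((hev.filter_mono nhdsWithin_le_nhds).and (eventually_of_mem hmem fun x hx => hx)).exists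
  have hcpos : 0 < θ*δ := mul_pos hθ hδmem.1
  have hne2 : (2*H-1) ≠ 0 := ne_of_gt (by linarith [hH.1])
  have hB : Tendsto (fun T : ℝ => Real.exp (-θ*(δ*T)) * T * (1-δ)^(2*H-1)/(2*H-1))
      atTop (nhds 0) := by
    have h1 : Tendsto (fun x : ℝ => x^(1:ℕ) * Real.exp (-x)) atTop (nhds 0) :=
      Real.tendsto_pow_mul_exp_neg_atTop_nhds_zero 1
    have h2 : Tendsto (fun T : ℝ => θ*δ*T) atTop atTop :=
      tendsto_id.const_mul_atTop hcpos
    have h3 := (h1.comp h2).mul_const ((1-δ)^(2*H-1)/((2*H-1)*(θ*δ)))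
    rw [zero_mul] at h3
    refine h3.congr fun T => ?_
    simp only [Function.comp_apply, pow_one]
    rw [show -(θ*δ*T) = -θ*(δ*T) by ring]
    field_simp
    linear_combination (T * (1 - δ) ^ (2 * H - 1)) * mul_inv_cancel₀ hδmem.1.ne'
  have h2' : Tendsto (fun T : ℝ => θ*T) atTop atTop := tendsto_id.const_mul_atTop hθ
  have h4 : Tendsto (fun T : ℝ => Real.exp (-(θ*T))) atTop (nhds 0) :=
    Real.tendsto_exp_atBot.comp (tendsto_neg_atTop_atBot.comp h2')
  have hA : Tendsto (fun T : ℝ => (1 - Real.exp (-θ*T))/θ) atTop (nhds θ⁻¹) := by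
    have h5 : Tendsto (fun T : ℝ => (1 - Real.exp (-(θ*T)))/θ) atTop (nhds ((1-0)/θ)) :=
      (tendsto_const_nhds.sub h4).div_const θ
    norm_num [one_div] at h5
    refine h5.congr fun T => ?_
    rw [neg_mul]
  have hAev : ∀ᶠ T in atTop, θ⁻¹ - ε < (1 - Real.exp (-θ*T))/θ :=
    hA.eventually_const_lt (by linarith)
  have hBev : ∀ᶠ T in atTop, Real.exp (-θ*(δ*T)) * T * (1-δ)^(2*H-1)/(2*H-1) < ε/2 :=
    hB.eventually_lt_const (by linarith)
  filter_upwards [hAev, hBev, eventually_gt_atTop 0] with T h1 h2 hT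
  rw [Real.dist_eq, abs_lt]
  have hlow := lower_bd hθ hH hT
  have hup := upper_bd hθ hH hδmem hT
  constructor
  · linarith
  · linarith

theorem I22_limit (θ H : ℝ) (hθ : 0 < θ) (hH : H ∈ Set.Ioo (1/2 : ℝ) 1) :
    Tendsto (fun T : ℝ =>
        T ^ (4 - 4 * H) *
          ∫ x2 in Set.Icc (0:ℝ) T, ∫ x4 in Set.Icc (0:ℝ) T,
            Real.exp (-θ * x2) * |x2 - T| ^ (2 * H - 2) *
              Real.exp (-θ * (T - x4)) * |x4| ^ (2 * H - 2))
      atTop (nhds (θ ^ (-2 : ℝ))) := by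
  have hL := L_tendsto hθ hH
  have hsq := hL.mul hL
  have hval : θ⁻¹ * θ⁻¹ = θ^(-2:ℝ) := by
    rw [Real.rpow_neg hθ.le, show (2:ℝ) = ((2:ℕ):ℝ) by norm_num, Real.rpow_natCast, pow_two,
      mul_inv]
  rw [← hval]
  refine Tendsto.congr' ?_ hsq
  filter_upwards [eventually_gt_atTop 0] with T hT
  have hinner : ∀ x2 : ℝ, (∫ x4 in Set.Icc (0:ℝ) T,
        Real.exp (-θ * x2) * |x2 - T| ^ (2 * H - 2) *
          Real.exp (-θ * (T - x4)) * |x4| ^ (2 * H - 2))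
      = (Real.exp (-θ * x2) * |x2 - T| ^ (2 * H - 2)) *
          ∫ x4 in Set.Icc (0:ℝ) T, Real.exp (-θ * (T - x4)) * |x4| ^ (2 * H - 2) := by
    intro x2
    rw [← MeasureTheory.integral_const_mul]
    exact MeasureTheory.integral_congr_ae (Filter.Eventually.of_forall fun x4 => by ring)
  have hf : (∫ x in Set.Icc (0:ℝ) T, Real.exp (-θ * x) * |x - T| ^ (2 * H - 2))
      = ∫ x in (0:ℝ)..T, Real.exp (-θ*x) * (T-x)^(2*H-2) := by
    rw [MeasureTheory.integral_Icc_eq_integral_Ioc, ← intervalIntegral.integral_of_le hT.le]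
    apply intervalIntegral.integral_congr
    intro x hx
    rw [Set.uIcc_of_le hT.le] at hx
    show Real.exp (-θ*x) * |x - T|^(2*H-2) = Real.exp (-θ*x) * (T-x)^(2*H-2)
    rw [abs_of_nonpos (by linarith [hx.2] : x - T ≤ 0), neg_sub]
  have hg : (∫ x in Set.Icc (0:ℝ) T, Real.exp (-θ * (T - x)) * |x| ^ (2 * H - 2))
      = ∫ x in (0:ℝ)..T, Real.exp (-θ*x) * (T-x)^(2*H-2) := by
    rw [MeasureTheory.integral_Icc_eq_integral_Ioc, ← intervalIntegral.integral_of_le hT.le]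
    have hsub := intervalIntegral.integral_comp_sub_left (a := 0) (b := T)
      (fun y : ℝ => Real.exp (-θ*y) * (T-y)^(2*H-2)) T
    simp only [sub_zero, sub_self] at hsub
    rw [← hsub]
    apply intervalIntegral.integral_congr
    intro x hx
    rw [Set.uIcc_of_le hT.le] at hx
    show Real.exp (-θ*(T-x)) * |x|^(2*H-2) = Real.exp (-θ*(T-x)) * (T-(T-x))^(2*H-2)
    rw [show T - (T - x) = x by ring, abs_of_nonneg hx.1]
  symm
  calc T ^ (4 - 4 * H) *
          ∫ x2 in Set.Icc (0:ℝ) T, ∫ x4 in Set.Icc (0:ℝ) T,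
            Real.exp (-θ * x2) * |x2 - T| ^ (2 * H - 2) *
              Real.exp (-θ * (T - x4)) * |x4| ^ (2 * H - 2)
      = T ^ (4 - 4 * H) *
          ((∫ x2 in Set.Icc (0:ℝ) T, Real.exp (-θ * x2) * |x2 - T| ^ (2 * H - 2)) *
            ∫ x4 in Set.Icc (0:ℝ) T, Real.exp (-θ * (T - x4)) * |x4| ^ (2 * H - 2)) := by
        congr 1
        rw [← MeasureTheory.integral_mul_const]
        exact MeasureTheory.integral_congr_ae (Filter.Eventually.of_forall fun x2 => hinner x2)
    _ = T ^ (4 - 4 * H) *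
          ((∫ x in (0:ℝ)..T, Real.exp (-θ*x) * (T-x)^(2*H-2)) *
            ∫ x in (0:ℝ)..T, Real.exp (-θ*x) * (T-x)^(2*H-2)) := by
        rw [hf, hg]
    _ = (T^(2-2*H) * ∫ x in (0:ℝ)..T, Real.exp (-θ*x) * (T-x)^(2*H-2)) *
          (T^(2-2*H) * ∫ x in (0:ℝ)..T, Real.exp (-θ*x) * (T-x)^(2*H-2)) := by
        have hTT : T^(2-2*H) * T^(2-2*H) = T^(4-4*H) := by
          rw [← Real.rpow_add hT, show (2-2*H)+(2-2*H) = 4-4*H by ring]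
        linear_combination (-((∫ x in (0:ℝ)..T, Real.exp (-θ*x) * (T-x)^(2*H-2)) *
          (∫ x in (0:ℝ)..T, Real.exp (-θ*x) * (T-x)^(2*H-2)))) * hTT
end
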